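/- arXiv:2003.05165 — 2 statements merged into one kernel-verified Lean document; each statement's English description precedes it below -/
import Mathlib

section
/- Let Λ be a nontrivial chain transitive compact invariant set of a flow φ_t on a compact Riemannian manifold, and let σ ∈ Λ be a hyperbolic singularity of the generating vector field. Then the stable manifold of σ meets Λ at some point other than σ, and the unstable manifold of σ meets Λ at some point other than σ. -/
/- Common setting: the compact manifold is modelled by a finite-dimensional real
inner product space `E`; a `FlowPkg` packages a `C¹` vector field `X`, its flow `φ`,
the tangent flow `Dφ` and the derivative `DX` of the vector field. -/

open scoped RealInnerProductSpace

section Defs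

variable (E : Type*) [NormedAddCommGroup E] [InnerProductSpace ℝ E] [FiniteDimensional ℝ E]

structure FlowPkg where
  X : E → E
  DX : E → E →L[ℝ] E
  φ : ℝ → E → E
  Dφ : ℝ → E → E →L[ℝ] E
  contX : Continuous X
  contφ : Continuous fun p : ℝ × E => φ p.1 p.2
  flow_zero : ∀ x, φ 0 x = x
  flow_add : ∀ s t x, φ (s + t) x = φ s (φ t x)
  deriv_time : ∀ t x, HasDerivAt (fun s => φ s x) (X (φ t x)) t
  deriv_space : ∀ t x, HasFDerivAt (φ t) (Dφ t x) x
  deriv_X : ∀ x, HasFDerivAt X (DX x) x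

end Defs

variable {E : Type*} [NormedAddCommGroup E] [InnerProductSpace ℝ E] [FiniteDimensional ℝ E]

/-- normalization of a vector -/
noncomputable def nrm (v : E) : E := ‖v‖⁻¹ • v

/-- area of the parallelogram spanned by two vectors (norm of `u ∧ v`) -/
noncomputable def area (u v : E) : ℝ := Real.sqrt (‖u‖ ^ 2 * ‖v‖ ^ 2 - ⟪u, v⟫ ^ 2)

namespace FlowPkg

variable (P : FlowPkg E)

def Invariant (Λ : Set E) : Prop := ∀ t : ℝ, ∀ x ∈ Λ, P.φ t x ∈ Λ

def orbit (x : E) : Set E := Set.range fun t : ℝ => P.φ t x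

/-- `Λ` is nontrivial if it is not a single orbit -/
def NontrivialSet (Λ : Set E) : Prop := ¬ ∃ x : E, Λ = P.orbit x

/-- a finite `δ`-pseudo orbit `(x i, T i)`, `0 ≤ i ≤ n`, all times `≥ 1` -/
def IsPseudoOrbit (δ : ℝ) (n : ℕ) (x : ℕ → E) (T : ℕ → ℝ) : Prop :=
  (∀ i < n, 1 ≤ T i) ∧ ∀ i < n, dist (P.φ (T i) (x i)) (x (i + 1)) < δ

/-- a `δ`-pseudo orbit from `a` to `b` -/
def ChainFrom (a b : E) : Prop :=
  ∀ δ > (0:ℝ), ∃ n : ℕ, ∃ x : ℕ → E, ∃ T : ℕ → ℝ,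
    0 < n ∧ P.IsPseudoOrbit δ n x T ∧ x 0 = a ∧ x n = b

def ChainTransitive (Λ : Set E) : Prop :=
  ∀ a ∈ Λ, ∀ b ∈ Λ, ∀ δ > (0:ℝ), ∃ n : ℕ, ∃ x : ℕ → E, ∃ T : ℕ → ℝ,
    0 < n ∧ P.IsPseudoOrbit δ n x T ∧ (∀ i ≤ n, x i ∈ Λ) ∧ x 0 = a ∧ x n = b

/-- the chain recurrent set -/
def CR : Set E := {x | P.ChainFrom x x}

/-- the chain class of a point -/
def ChainClass (σ : E) : Set E := {x | P.ChainFrom σ x ∧ P.ChainFrom x σ}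

/-- the orbit of `z` `ε`-shadows (with an increasing reparametrization `θ`) the
bi-infinite pseudo orbit `(x i)` with accumulated times `s i`. -/
def Shadows (ε : ℝ) (x : ℤ → E) (s : ℤ → ℝ) (z : E) : Prop :=
  ∃ θ : ℝ → ℝ, StrictMono θ ∧ Function.Surjective θ ∧
    ∀ i : ℤ, ∀ t ∈ Set.Icc (s i) (s (i + 1)),
      dist (P.φ (t - s i) (x i)) (P.φ (θ t) z) < ε

/-- the shadowing property on `Λ` -/
def ShadowingOn (Λ : Set E) : Prop :=
  ∀ ε > (0:ℝ), ∃ δ > (0:ℝ), ∀ (x : ℤ → E) (T s : ℤ → ℝ),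
    (∀ i, x i ∈ Λ) → (∀ i, 1 ≤ T i) →
    (∀ i, dist (P.φ (T i) (x i)) (x (i + 1)) < δ) →
    s 0 = 0 → (∀ i, s (i + 1) = s i + T i) →
    ∃ z : E, P.Shadows ε x s z

/-- the intrinsic shadowing property on `Λ`: the shadowing point lies in `Λ` -/
def IntrinsicShadowingOn (Λ : Set E) : Prop :=
  ∀ ε > (0:ℝ), ∃ δ > (0:ℝ), ∀ (x : ℤ → E) (T s : ℤ → ℝ),
    (∀ i, x i ∈ Λ) → (∀ i, 1 ≤ T i) →
    (∀ i, dist (P.φ (T i) (x i)) (x (i + 1)) < δ) →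
    s 0 = 0 → (∀ i, s (i + 1) = s i + T i) →
    ∃ z ∈ Λ, P.Shadows ε x s z

/-- the stable set (stable manifold) of `σ` -/
def Ws (σ : E) : Set E :=
  {x | Filter.Tendsto (fun t : ℝ => P.φ t x) Filter.atTop (nhds σ)}

/-- the unstable set (unstable manifold) of `σ` -/
def Wu (σ : E) : Set E :=
  {x | Filter.Tendsto (fun t : ℝ => P.φ t x) Filter.atBot (nhds σ)}

/-- the strong stable manifold of a singularity `σ`, of contraction rates `< rate`:
points converging to `σ` strictly faster than `e^{rate·t}`. -/
def WssMan (σ : E) (rate : ℝ) : Set E :=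
  {x | ∃ K > (0:ℝ), ∃ r < rate, ∀ t ≥ (0:ℝ), dist (P.φ t x) σ ≤ K * Real.exp (r * t)}

/-- the nonwandering set -/
def NonWandering : Set E :=
  {x | ∀ U ∈ nhds x, ∀ T : ℝ, ∃ t ≥ T, ((P.φ t '' U) ∩ U).Nonempty}

/-- the linear Poincaré flow along the orbit of a regular point `x` -/
noncomputable def psiL (t : ℝ) (x : E) (v : E) : E :=
  P.Dφ t x v - ⟪P.Dφ t x v, nrm (P.X (P.φ t x))⟫ • nrm (P.X (P.φ t x))

/-- the flow induced on the unit sphere bundle by the tangent flow -/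
noncomputable def phiSharp (t : ℝ) (p : E × E) : E × E :=
  (P.φ t p.1, nrm (P.Dφ t p.1 p.2))

/-- the extended linear Poincaré flow on the normal bundle over the sphere bundle -/
noncomputable def psiE (t : ℝ) (p : E × E) (v : E) : E :=
  P.Dφ t p.1 v - ⟪P.Dφ t p.1 v, nrm (P.Dφ t p.1 p.2)⟫ • nrm (P.Dφ t p.1 p.2)

end FlowPkg

/-- a hyperbolic singularity, with its hyperbolic splitting `Es ⊕ Eu` -/
structure HypSing (P : FlowPkg E) (σ : E) where
  Es : Submodule ℝ E
  Eu : Submodule ℝ E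
  zero : P.X σ = 0
  compl : IsCompl Es Eu
  invs : ∀ t : ℝ, ∀ v ∈ Es, P.Dφ t σ v ∈ Es
  invu : ∀ t : ℝ, ∀ v ∈ Eu, P.Dφ t σ v ∈ Eu
  C : ℝ
  lam : ℝ
  hC : 1 ≤ C
  hlam : 0 < lam
  contr : ∀ t ≥ (0:ℝ), ∀ v ∈ Es, ‖P.Dφ t σ v‖ ≤ C * Real.exp (-lam * t) * ‖v‖
  expand : ∀ t ≥ (0:ℝ), ∀ v ∈ Eu, ‖P.Dφ (-t) σ v‖ ≤ C * Real.exp (-lam * t) * ‖v‖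

/-- a hyperbolic periodic orbit through `p` of period `T` -/
structure HypPer (P : FlowPkg E) (p : E) (T : ℝ) where
  hT : 0 < T
  per : P.φ T p = p
  reg : P.X p ≠ 0
  Es : Submodule ℝ E
  Eu : Submodule ℝ E
  compl : Es ⊔ Submodule.span ℝ {P.X p} ⊔ Eu = ⊤
  indep1 : Es ⊓ (Submodule.span ℝ {P.X p} ⊔ Eu) = ⊥
  indep2 : Submodule.span ℝ {P.X p} ⊓ Eu = ⊥
  invs : ∀ v ∈ Es, P.Dφ T p v ∈ Es
  invu : ∀ v ∈ Eu, P.Dφ T p v ∈ Eu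
  C : ℝ
  lam : ℝ
  hC : 1 ≤ C
  hlam : 0 < lam
  contr : ∀ n : ℕ, ∀ v ∈ Es, ‖P.Dφ (n * T) p v‖ ≤ C * Real.exp (-lam * n) * ‖v‖
  expand : ∀ n : ℕ, ∀ v ∈ Eu, ‖P.Dφ (-(n * T)) p v‖ ≤ C * Real.exp (-lam * n) * ‖v‖

/-- positively singular hyperbolic set: dominated splitting `Ess ⊕ Ecu` of the
tangent bundle over `Λ`, `Ess` contracting, `Ecu` area-expanding, all
singularities hyperbolic. -/
structure PosSingHyp (P : FlowPkg E) (Λ : Set E) where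
  Ess : E → Submodule ℝ E
  Ecu : E → Submodule ℝ E
  compl : ∀ x ∈ Λ, IsCompl (Ess x) (Ecu x)
  invs : ∀ t : ℝ, ∀ x ∈ Λ, ∀ v ∈ Ess x, P.Dφ t x v ∈ Ess (P.φ t x)
  invu : ∀ t : ℝ, ∀ x ∈ Λ, ∀ v ∈ Ecu x, P.Dφ t x v ∈ Ecu (P.φ t x)
  C : ℝ
  lam : ℝ
  hC : 1 < C
  hlam : 0 < lam
  dom : ∀ t ≥ (0:ℝ), ∀ x ∈ Λ, ∀ u ∈ Ess x, ∀ v ∈ Ecu (P.φ t x),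
    ‖P.Dφ t x u‖ * ‖P.Dφ (-t) (P.φ t x) v‖ ≤ C * Real.exp (-lam * t) * (‖u‖ * ‖v‖)
  contr : ∀ t ≥ (0:ℝ), ∀ x ∈ Λ, ∀ v ∈ Ess x,
    ‖P.Dφ t x v‖ ≤ C * Real.exp (-lam * t) * ‖v‖
  area_exp : ∀ t ≥ (0:ℝ), ∀ x ∈ Λ, ∀ u ∈ Ecu x, ∀ v ∈ Ecu x,
    area (P.Dφ (-t) x u) (P.Dφ (-t) x v) ≤ C * Real.exp (-lam * t) * area u v
  singHyp : ∀ σ ∈ Λ, P.X σ = 0 → Nonempty (HypSing P σ)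

/-- negatively singular hyperbolic set (positively singular hyperbolic for `-X`) -/
structure NegSingHyp (P : FlowPkg E) (Λ : Set E) where
  Euu : E → Submodule ℝ E
  Ecs : E → Submodule ℝ E
  compl : ∀ x ∈ Λ, IsCompl (Euu x) (Ecs x)
  invs : ∀ t : ℝ, ∀ x ∈ Λ, ∀ v ∈ Euu x, P.Dφ t x v ∈ Euu (P.φ t x)
  invu : ∀ t : ℝ, ∀ x ∈ Λ, ∀ v ∈ Ecs x, P.Dφ t x v ∈ Ecs (P.φ t x)
  C : ℝ
  lam : ℝ
  hC : 1 < C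
  hlam : 0 < lam
  dom : ∀ t ≥ (0:ℝ), ∀ x ∈ Λ, ∀ u ∈ Euu x, ∀ v ∈ Ecs (P.φ (-t) x),
    ‖P.Dφ (-t) x u‖ * ‖P.Dφ t (P.φ (-t) x) v‖ ≤ C * Real.exp (-lam * t) * (‖u‖ * ‖v‖)
  contr : ∀ t ≥ (0:ℝ), ∀ x ∈ Λ, ∀ v ∈ Euu x,
    ‖P.Dφ (-t) x v‖ ≤ C * Real.exp (-lam * t) * ‖v‖
  area_exp : ∀ t ≥ (0:ℝ), ∀ x ∈ Λ, ∀ u ∈ Ecs x, ∀ v ∈ Ecs x,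
    area (P.Dφ t x u) (P.Dφ t x v) ≤ C * Real.exp (-lam * t) * area u v
  singHyp : ∀ σ ∈ Λ, P.X σ = 0 → Nonempty (HypSing P σ)

/-- singular hyperbolic: positively singular hyperbolic for `X` or for `-X` -/
def SingularHyperbolicOn (P : FlowPkg E) (Λ : Set E) : Prop :=
  Nonempty (PosSingHyp P Λ) ∨ Nonempty (NegSingHyp P Λ)

/-- a hyperbolic set: splitting `Es ⊕ ⟨X⟩ ⊕ Eu` with `Es` contracting and `Eu` expanding -/
structure HyperbolicSet (P : FlowPkg E) (Λ : Set E) where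
  Es : E → Submodule ℝ E
  Eu : E → Submodule ℝ E
  compl : ∀ x ∈ Λ, Es x ⊔ Submodule.span ℝ {P.X x} ⊔ Eu x = ⊤
  indep1 : ∀ x ∈ Λ, Es x ⊓ (Submodule.span ℝ {P.X x} ⊔ Eu x) = ⊥
  indep2 : ∀ x ∈ Λ, Submodule.span ℝ {P.X x} ⊓ Eu x = ⊥
  invs : ∀ t : ℝ, ∀ x ∈ Λ, ∀ v ∈ Es x, P.Dφ t x v ∈ Es (P.φ t x)
  invu : ∀ t : ℝ, ∀ x ∈ Λ, ∀ v ∈ Eu x, P.Dφ t x v ∈ Eu (P.φ t x)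
  C : ℝ
  lam : ℝ
  hC : 1 ≤ C
  hlam : 0 < lam
  contr : ∀ t ≥ (0:ℝ), ∀ x ∈ Λ, ∀ v ∈ Es x,
    ‖P.Dφ t x v‖ ≤ C * Real.exp (-lam * t) * ‖v‖
  expand : ∀ t ≥ (0:ℝ), ∀ x ∈ Λ, ∀ v ∈ Eu x,
    ‖P.Dφ (-t) x v‖ ≤ C * Real.exp (-lam * t) * ‖v‖

/-- `C¹` closeness of two vector fields -/
def C1Close (P Q : FlowPkg E) (ε : ℝ) : Prop :=
  ∀ x : E, ‖Q.X x - P.X x‖ + ‖Q.DX x - P.DX x‖ < ε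

/-- a star vector field: all critical elements of all `C¹`-nearby vector fields
are hyperbolic -/
def FlowPkg.Star (P : FlowPkg E) : Prop :=
  ∃ ε > (0:ℝ), ∀ Q : FlowPkg E, C1Close P Q ε →
    (∀ σ : E, Q.X σ = 0 → Nonempty (HypSing Q σ)) ∧
    (∀ p : E, ∀ T : ℝ, 0 < T → Q.φ T p = p → Q.X p ≠ 0 → Nonempty (HypPer Q p T))

/-- a preperiodic point: accumulated by periodic points of `C¹`-nearby vector fields -/
def FlowPkg.PreperiodicPt (P : FlowPkg E) (x : E) : Prop :=
  ∀ ε > (0:ℝ), ∃ Q : FlowPkg E, C1Close P Q ε ∧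
    ∃ p : E, ∃ T : ℝ, 0 < T ∧ Q.φ T p = p ∧ Q.X p ≠ 0 ∧ dist p x < ε

/-- Axiom A: the nonwandering set is hyperbolic and is the closure of the set of
critical elements -/
def FlowPkg.AxiomA (P : FlowPkg E) : Prop :=
  Nonempty (HyperbolicSet P P.NonWandering) ∧
  P.NonWandering =
    closure ({σ : E | P.X σ = 0} ∪ {p : E | ∃ T > (0:ℝ), P.φ T p = p ∧ P.X p ≠ 0})

/-- the no-cycle condition, formulated (as is equivalent for Axiom A flows) as the
coincidence of the chain recurrent set with the nonwandering set -/
def FlowPkg.NoCycle (P : FlowPkg E) : Prop := P.CR = P.NonWandering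

/-- a continuous family of local strong stable disks over `Λ`, invariant and
uniformly contracted at time `T` -/
structure StrongStableFamily (P : FlowPkg E) (Λ : Set E) (T η : ℝ) where
  hT : 0 < T
  hη0 : 0 < η
  hη1 : η < 1
  Wloc : E → Set E
  mem_self : ∀ x ∈ Λ, x ∈ Wloc x
  inv : ∀ x ∈ Λ, P.φ T '' Wloc x ⊆ Wloc (P.φ T x)
  contr : ∀ x ∈ Λ, ∀ y ∈ Wloc x, dist (P.φ T y) (P.φ T x) ≤ η * dist y x

/-- the global strong stable manifold through `x` -/
def StrongStableFamily.Wss {P : FlowPkg E} {Λ : Set E} {T η : ℝ}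
    (F : StrongStableFamily P Λ T η) (x : E) : Set E :=
  ⋃ n : ℕ, P.φ (-(((n : ℝ) + 1) * T)) '' F.Wloc (P.φ (((n : ℝ) + 1) * T) x)

/-- a positively Lorenz-like hyperbolic singularity: splitting `Ess ⊕ Ec ⊕ Eu`
with `dim Ec = 1`, rates `lamss < lams < 0 < lamu` and positive saddle value
`lams + lamu > 0` -/
structure PosLorenzLike (P : FlowPkg E) (σ : E) where
  zero : P.X σ = 0
  Ess : Submodule ℝ E
  Ec : Submodule ℝ E
  Eu : Submodule ℝ E
  dimc : Module.finrank ℝ Ec = 1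
  compl : Ess ⊔ Ec ⊔ Eu = ⊤
  indep1 : Ess ⊓ (Ec ⊔ Eu) = ⊥
  indep2 : Ec ⊓ Eu = ⊥
  invss : ∀ t : ℝ, ∀ v ∈ Ess, P.Dφ t σ v ∈ Ess
  invc : ∀ t : ℝ, ∀ v ∈ Ec, P.Dφ t σ v ∈ Ec
  invu : ∀ t : ℝ, ∀ v ∈ Eu, P.Dφ t σ v ∈ Eu
  C : ℝ
  lamss : ℝ
  lams : ℝ
  lamu : ℝ
  hC : 1 ≤ C
  hss : lamss < lams
  hs : lams < 0
  hu : 0 < lamu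
  saddle : 0 < lams + lamu
  contr_ss : ∀ t ≥ (0:ℝ), ∀ v ∈ Ess, ‖P.Dφ t σ v‖ ≤ C * Real.exp (lamss * t) * ‖v‖
  contr_c : ∀ t ≥ (0:ℝ), ∀ v ∈ Ec, ‖P.Dφ t σ v‖ ≤ C * Real.exp (lams * t) * ‖v‖
  lower_c : ∀ t ≥ (0:ℝ), ∀ v ∈ Ec, ‖v‖ ≤ C * Real.exp (-lams * t) * ‖P.Dφ t σ v‖
  expand_u : ∀ t ≥ (0:ℝ), ∀ v ∈ Eu, ‖P.Dφ (-t) σ v‖ ≤ C * Real.exp (-lamu * t) * ‖v‖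

/-- multisingular hyperbolicity (Bonatti–da Luz): dominated splitting of the
normal bundle over the compact lifted set `B ⊂ SM` for the extended linear
Poincaré flow, with reparametrizing cocycles `h σ` making the two subbundles
uniformly contracted/expanded -/
structure MultiSingHyp (P : FlowPkg E) (Λ : Set E) where
  singHyp : ∀ σ ∈ Λ, P.X σ = 0 → Nonempty (HypSing P σ)
  B : Set (E × E)
  hBcompact : IsCompact B
  hBunit : ∀ p ∈ B, ‖p.2‖ = 1
  hBinv : ∀ t : ℝ, ∀ p ∈ B, P.phiSharp t p ∈ B
  hBflow : ∀ x ∈ Λ, P.X x ≠ 0 → (x, nrm (P.X x)) ∈ B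
  hBbase : ∀ p ∈ B, p.1 ∈ Λ
  Δs : E × E → Submodule ℝ E
  Δu : E × E → Submodule ℝ E
  perp : ∀ p ∈ B, (∀ v ∈ Δs p, ⟪v, p.2⟫ = 0) ∧ (∀ v ∈ Δu p, ⟪v, p.2⟫ = 0)
  span : ∀ p ∈ B, Δs p ⊔ Δu p ⊔ Submodule.span ℝ {p.2} = ⊤
  indep : ∀ p ∈ B, Δs p ⊓ Δu p = ⊥
  invs : ∀ t : ℝ, ∀ p ∈ B, ∀ v ∈ Δs p, P.psiE t p v ∈ Δs (P.phiSharp t p)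
  invu : ∀ t : ℝ, ∀ p ∈ B, ∀ v ∈ Δu p, P.psiE t p v ∈ Δu (P.phiSharp t p)
  idx : ℕ
  hidx : ∀ p ∈ B, Module.finrank ℝ (Δs p) = idx
  Cdom : ℝ
  lamdom : ℝ
  hCdom : 1 ≤ Cdom
  hlamdom : 0 < lamdom
  dom : ∀ t ≥ (0:ℝ), ∀ p ∈ B, ∀ u ∈ Δs p, ∀ v ∈ Δu (P.phiSharp t p),
    ‖P.psiE t p u‖ * ‖P.psiE (-t) (P.phiSharp t p) v‖ ≤
      Cdom * Real.exp (-lamdom * t) * (‖u‖ * ‖v‖)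
  Splus : Finset E
  Sminus : Finset E
  hSp : ↑Splus ⊆ {σ ∈ Λ | P.X σ = 0}
  hSm : ↑Sminus ⊆ {σ ∈ Λ | P.X σ = 0}
  h : E → E × E → ℝ → ℝ
  hpos : ∀ σ p t, 0 < h σ p t
  hcoc : ∀ σ : E, (σ ∈ Splus ∨ σ ∈ Sminus) → ∀ p ∈ B, ∀ t s : ℝ,
    h σ p (t + s) = h σ p t * h σ (P.phiSharp t p) s
  C : ℝ
  lam : ℝ
  hC : 1 ≤ C
  hlam : 0 < lam
  contr_s : ∀ t ≥ (0:ℝ), ∀ p ∈ B, ∀ v ∈ Δs p,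
    (∏ σ ∈ Splus, h σ p t) * ‖P.psiE t p v‖ ≤ C * Real.exp (-lam * t) * ‖v‖
  contr_u : ∀ t ≥ (0:ℝ), ∀ p ∈ B, ∀ v ∈ Δu p,
    (∏ σ ∈ Sminus, h σ p (-t)) * ‖P.psiE (-t) p v‖ ≤ C * Real.exp (-lam * t) * ‖v‖

section Auxiliary

namespace FlowPkg
variable {E : Type*} [NormedAddCommGroup E] [InnerProductSpace ℝ E] [FiniteDimensional ℝ E]
variable (P : FlowPkg E)

lemma phi_inv (t : ℝ) (x : E) : P.φ (-t) (P.φ t x) = x := by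
  rw [← P.flow_add, neg_add_cancel, P.flow_zero]

lemma cont_t (t : ℝ) : Continuous (P.φ t) :=
  P.contφ.comp (continuous_const.prodMk continuous_id)

lemma phi_injective (t : ℝ) : Function.Injective (P.φ t) := by
  intro a b h
  have := congrArg (P.φ (-t)) h
  rwa [P.phi_inv, P.phi_inv] at this

lemma fix_local {σ : E} (hz : P.X σ = 0) :
    ∃ η > (0:ℝ), ∀ s : ℝ, |s| ≤ η → P.φ s σ = σ := by
  -- bound on X near σ
  obtain ⟨r₀, hr₀, hX⟩ : ∃ r₀ > (0:ℝ), ∀ x : E, ‖x - σ‖ ≤ r₀ →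
      ‖P.X x‖ ≤ (‖P.DX σ‖ + 1) * ‖x - σ‖ := by
    have h := (P.deriv_X σ).isLittleO.def (c := 1) one_pos
    rw [Metric.eventually_nhds_iff] at h
    obtain ⟨ρ, hρ, h⟩ := h
    refine ⟨ρ/2, by positivity, fun x hx => ?_⟩
    have hx' : dist x σ < ρ := by rw [dist_eq_norm]; linarith
    have := h hx'
    simp only [hz, sub_zero, one_mul] at this
    calc ‖P.X x‖ ≤ ‖P.X x - P.DX σ (x - σ)‖ + ‖P.DX σ (x - σ)‖ := by
          simpa using norm_add_le (P.X x - P.DX σ (x - σ)) (P.DX σ (x - σ))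
      _ ≤ ‖x - σ‖ + ‖P.DX σ‖ * ‖x - σ‖ := add_le_add this ((P.DX σ).le_opNorm _)
      _ = (‖P.DX σ‖ + 1) * ‖x - σ‖ := by ring
  set K := ‖P.DX σ‖ + 1 with hK
  -- small time interval where the orbit of σ stays in the ball
  obtain ⟨η, hη, hstay⟩ : ∃ η > (0:ℝ), ∀ s : ℝ, |s| ≤ η → ‖P.φ s σ - σ‖ ≤ r₀ := by
    have hc : Continuous fun s : ℝ => P.φ s σ :=
      P.contφ.comp (continuous_id.prodMk continuous_const)
    have hc0 : (fun s : ℝ => P.φ s σ) 0 = σ := P.flow_zero σ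
    have : ∀ᶠ s in nhds (0:ℝ), ‖P.φ s σ - σ‖ ≤ r₀ := by
      have h2 := (hc.tendsto 0) (Metric.closedBall_mem_nhds (P.φ 0 σ) hr₀)
      rw [Filter.eventually_iff_exists_mem]
      rw [Filter.mem_map] at h2
      refine ⟨_, h2, fun s hs => ?_⟩
      simp only [Set.mem_preimage, Metric.mem_closedBall, dist_eq_norm, P.flow_zero] at hs
      exact hs
    rw [Metric.eventually_nhds_iff] at this
    obtain ⟨η, hη, h⟩ := this
    exact ⟨η/2, by positivity, fun s hs => h (by rw [Real.dist_eq, sub_zero]; linarith)⟩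
  refine ⟨η, hη, fun s hs => ?_⟩
  rcases le_or_gt 0 s with h0 | h0
  · -- forward
    have key : ∀ x ∈ Set.Icc (0:ℝ) η, ‖P.φ x σ - σ‖ ≤ gronwallBound 0 K 0 (x - 0) := by
      apply norm_le_gronwallBound_of_norm_deriv_right_le
      · exact ((P.contφ.comp (continuous_id.prodMk continuous_const)).sub
          continuous_const).continuousOn
      · intro x _
        exact ((P.deriv_time x σ).sub_const σ).hasDerivWithinAt
      · simp [P.flow_zero]
      · intro x hx
        have h1 : |x| ≤ η := by
          rw [abs_of_nonneg hx.1]; exact hx.2.le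
        have := hX (P.φ x σ) (hstay x h1)
        simpa using this
    have := key s ⟨h0, by rwa [abs_of_nonneg h0] at hs⟩
    rw [gronwallBound_ε0] at this
    simp only [zero_mul, sub_zero] at this
    have : ‖P.φ s σ - σ‖ ≤ 0 := this
    have := norm_le_zero_iff.mp this
    exact sub_eq_zero.mp this
  · -- backward
    have key : ∀ x ∈ Set.Icc (0:ℝ) η, ‖P.φ (-x) σ - σ‖ ≤ gronwallBound 0 K 0 (x - 0) := by
      apply norm_le_gronwallBound_of_norm_deriv_right_le
        (f' := fun x => -P.X (P.φ (-x) σ))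
      · exact ((P.contφ.comp ((continuous_id.neg).prodMk continuous_const)).sub
          continuous_const).continuousOn
      · intro x _
        have h1 : HasDerivAt (fun u : ℝ => P.φ u σ) (P.X (P.φ (-x) σ)) (-x) :=
          P.deriv_time (-x) σ
        have h2 := HasDerivAt.scomp x h1 (hasDerivAt_neg x)
        have h3 : HasDerivAt (fun u : ℝ => P.φ (-u) σ) (-P.X (P.φ (-x) σ)) x := by
          simpa [Function.comp_def] using h2
        exact (h3.sub_const σ).hasDerivWithinAt
      · simp [P.flow_zero]
      · intro x hx
        have h1 : |(-x)| ≤ η := by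
          rw [abs_neg, abs_of_nonneg hx.1]; exact hx.2.le
        have := hX (P.φ (-x) σ) (hstay (-x) h1)
        simpa using this
    have hs' : -s ∈ Set.Icc (0:ℝ) η := ⟨by linarith, by rwa [abs_of_neg h0] at hs⟩
    have := key (-s) hs'
    rw [gronwallBound_ε0] at this
    simp only [zero_mul, sub_zero, neg_neg] at this
    have : ‖P.φ s σ - σ‖ ≤ 0 := this
    exact sub_eq_zero.mp (norm_le_zero_iff.mp this)


lemma fixed {σ : E} (hz : P.X σ = 0) : ∀ t : ℝ, P.φ t σ = σ := by
  obtain ⟨η, hη, hloc⟩ := P.fix_local hz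
  have key : ∀ n : ℕ, ∀ s : ℝ, |s| ≤ (n+1) * η → P.φ s σ = σ := by
    intro n
    induction n with
    | zero => intro s hs; exact hloc s (by simpa using hs)
    | succ n ih =>
      intro s hs
      rcases le_or_gt (|s|) η with h | h
      · exact hloc s h
      rcases le_or_gt 0 s with h0 | h0
      · have habs : |s| = s := abs_of_nonneg h0
        have e1 : P.φ s σ = P.φ (s - η) (P.φ η σ) := by
          rw [← P.flow_add]; ring_nf
        have hb : |s - η| ≤ (↑n + 1) * η := by
          have h1 : s ≤ (↑n + 1 + 1) * η := by push_cast at hs; linarith [habs ▸ hs]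
          have h2 : η < s := habs ▸ h
          rw [abs_of_nonneg (by linarith : (0:ℝ) ≤ s - η)]; linarith
        rw [e1, hloc η (by rw [abs_of_pos hη]), ih (s - η) hb]
      · have habs : |s| = -s := abs_of_neg h0
        have e1 : P.φ s σ = P.φ (s + η) (P.φ (-η) σ) := by
          rw [← P.flow_add]; ring_nf
        have hb : |s + η| ≤ (↑n + 1) * η := by
          have h1 : -s ≤ (↑n + 1 + 1) * η := by push_cast at hs; linarith [habs ▸ hs]
          have h2 : η < -s := habs ▸ h
          rw [abs_of_nonpos (by linarith : s + η ≤ 0)]; linarith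
        rw [e1, hloc (-η) (by rw [abs_neg, abs_of_pos hη]), ih (s + η) hb]
  intro t
  obtain ⟨n, hn⟩ := exists_nat_ge (|t| / η)
  refine key n t ?_
  rw [div_le_iff₀ hη] at hn
  nlinarith

lemma Dphi_zero (x : E) : P.Dφ 0 x = ContinuousLinearMap.id ℝ E := by
  refine (P.deriv_space 0 x).unique ?_
  have h : P.φ 0 = id := funext (P.flow_zero)
  rw [h]; exact hasFDerivAt_id x

lemma Dphi_comp {σ : E} (hz : ∀ t, P.φ t σ = σ) (s t : ℝ) :
    P.Dφ (s + t) σ = (P.Dφ s σ).comp (P.Dφ t σ) := by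
  refine (P.deriv_space (s+t) σ).unique ?_
  have h3 : P.φ (s+t) = P.φ s ∘ P.φ t := funext fun x => P.flow_add s t x
  rw [h3]
  have h2 : HasFDerivAt (P.φ s) (P.Dφ s σ) (P.φ t σ) := by
    rw [hz t]; exact P.deriv_space s σ
  exact h2.comp σ (P.deriv_space t σ)

end FlowPkg



structure DHyp (E : Type*) [NormedAddCommGroup E] where
  σ : E
  F : E → E
  G : E → E
  hFG : ∀ x, F (G x) = x
  hGF : ∀ x, G (F x) = x
  contF : Continuous F
  contG : Continuous G
  NS : E → ℝ
  NU : E → ℝ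
  NS_nonneg : ∀ h, 0 ≤ NS h
  NU_nonneg : ∀ h, 0 ≤ NU h
  NS_add : ∀ a b, NS (a + b) ≤ NS a + NS b
  NU_add : ∀ a b, NU (a + b) ≤ NU a + NU b
  NS_neg : ∀ a, NS (-a) = NS a
  NU_neg : ∀ a, NU (-a) = NU a
  C₂ : ℝ
  hC₂ : 1 ≤ C₂
  an_le : ∀ h, max (NS h) (NU h) ≤ C₂ * ‖h‖
  norm_le : ∀ h, ‖h‖ ≤ 2 * max (NS h) (NU h)
  μ : ℝ
  ε : ℝ
  δ : ℝ
  M₁ : ℝ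
  hμ0 : 0 < μ
  hμ1 : μ < 1
  hε : 0 < ε
  hν1 : μ + ε < 1
  hγ1 : 1 < μ⁻¹ - ε
  hcone : μ + ε ≤ μ⁻¹ - ε
  hδ : 0 < δ
  hM₁ : 1 ≤ M₁
  stepF_S : ∀ h, max (NS h) (NU h) ≤ δ →
    NS (F (σ + h) - σ) ≤ μ * NS h + ε * max (NS h) (NU h)
  stepF_U : ∀ h, max (NS h) (NU h) ≤ δ →
    μ⁻¹ * NU h - ε * max (NS h) (NU h) ≤ NU (F (σ + h) - σ)
  stepG_U : ∀ h, max (NS h) (NU h) ≤ δ →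
    NU (G (σ + h) - σ) ≤ μ * NU h + ε * max (NS h) (NU h)
  stepG_S : ∀ h, max (NS h) (NU h) ≤ δ →
    μ⁻¹ * NS h - ε * max (NS h) (NU h) ≤ NS (G (σ + h) - σ)
  growF : ∀ h, max (NS h) (NU h) ≤ δ →
    max (NS (F (σ + h) - σ)) (NU (F (σ + h) - σ)) ≤ M₁ * max (NS h) (NU h)
  growG : ∀ h, max (NS h) (NU h) ≤ δ →
    max (NS (G (σ + h) - σ)) (NU (G (σ + h) - σ)) ≤ M₁ * max (NS h) (NU h)

namespace DHyp

variable {E : Type*} [NormedAddCommGroup E] (D : DHyp E)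

noncomputable def an (h : E) : ℝ := max (D.NS h) (D.NU h)

lemma an_nonneg (h : E) : 0 ≤ D.an h := le_trans (D.NS_nonneg h) (le_max_left _ _)

lemma an_add (a b : E) : D.an (a + b) ≤ D.an a + D.an b := by
  unfold an
  rcases max_cases (D.NS (a+b)) (D.NU (a+b)) with ⟨he, _⟩ | ⟨he, _⟩ <;> rw [he]
  · exact le_trans (D.NS_add a b)
      (add_le_add (le_max_left _ _) (le_max_left _ _))
  · exact le_trans (D.NU_add a b)
      (add_le_add (le_max_right _ _) (le_max_right _ _))

lemma an_neg (a : E) : D.an (-a) = D.an a := by unfold an; rw [D.NS_neg, D.NU_neg]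

lemma an_sub_triangle (a b c : E) : D.an (a - c) ≤ D.an (a - b) + D.an (b - c) := by
  have : a - c = (a - b) + (b - c) := by abel
  rw [this]; exact D.an_add _ _

lemma norm_le_two_an (h : E) : ‖h‖ ≤ 2 * D.an h := D.norm_le h

lemma an_le_C₂ (h : E) : D.an h ≤ D.C₂ * ‖h‖ := D.an_le h

lemma an_pos_of_ne {h : E} (hne : h ≠ 0) : 0 < D.an h := by
  by_contra hc
  push_neg at hc
  have h0 : D.an h = 0 := le_antisymm hc (D.an_nonneg h)
  have := D.norm_le_two_an h
  rw [h0] at this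
  simp only [mul_zero] at this
  exact hne (norm_le_zero_iff.mp this)

lemma an_continuous : Continuous D.an := by
  have hl : LipschitzWith (Real.toNNReal D.C₂) D.an := by
    rw [lipschitzWith_iff_dist_le_mul]
    intro a b
    have h1 : D.an a - D.an b ≤ D.C₂ * dist a b := by
      have := D.an_add (a - b) b
      simp only [sub_add_cancel] at this
      have h2 := D.an_le_C₂ (a - b)
      rw [dist_eq_norm]; linarith
    have h2 : D.an b - D.an a ≤ D.C₂ * dist a b := by
      have := D.an_add (b - a) a
      simp only [sub_add_cancel] at this
      have h2 := D.an_le_C₂ (b - a)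
      rw [dist_eq_norm, ← norm_neg, neg_sub]; linarith
    rw [Real.dist_eq, Real.coe_toNNReal _ (by linarith [D.hC₂] : (0:ℝ) ≤ D.C₂)]
    rw [abs_sub_le_iff]
    exact ⟨h1, h2⟩
  exact hl.continuous

noncomputable def symm : DHyp E where
  σ := D.σ
  F := D.G
  G := D.F
  hFG := D.hGF
  hGF := D.hFG
  contF := D.contG
  contG := D.contF
  NS := D.NU
  NU := D.NS
  NS_nonneg := D.NU_nonneg
  NU_nonneg := D.NS_nonneg
  NS_add := D.NU_add
  NU_add := D.NS_add
  NS_neg := D.NU_neg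
  NU_neg := D.NS_neg
  C₂ := D.C₂
  hC₂ := D.hC₂
  an_le := fun h => by rw [max_comm]; exact D.an_le h
  norm_le := fun h => by rw [max_comm]; exact D.norm_le h
  μ := D.μ
  ε := D.ε
  δ := D.δ
  M₁ := D.M₁
  hμ0 := D.hμ0
  hμ1 := D.hμ1
  hε := D.hε
  hν1 := D.hν1
  hγ1 := D.hγ1
  hcone := D.hcone
  hδ := D.hδ
  hM₁ := D.hM₁
  stepF_S := fun h hh => by
    rw [max_comm] at hh ⊢; exact D.stepG_U h hh
  stepF_U := fun h hh => by
    rw [max_comm] at hh ⊢; exact D.stepG_S h hh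
  stepG_U := fun h hh => by
    rw [max_comm] at hh ⊢; exact D.stepF_S h hh
  stepG_S := fun h hh => by
    rw [max_comm] at hh ⊢; exact D.stepF_U h hh
  growF := fun h hh => by
    rw [max_comm] at hh; rw [max_comm, max_comm (D.NU h)]; exact D.growG h hh
  growG := fun h hh => by
    rw [max_comm] at hh; rw [max_comm, max_comm (D.NU h)]; exact D.growF h hh

lemma an_symm (h : E) : D.symm.an h = D.an h := max_comm _ _

lemma iterate_left_inv (n : ℕ) (x : E) : D.G^[n] (D.F^[n] x) = x :=
  (Function.LeftInverse.iterate D.hGF n) x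

lemma iterate_right_inv (n : ℕ) (x : E) : D.F^[n] (D.G^[n] x) = x :=
  (Function.LeftInverse.iterate D.hFG n) x

lemma iter_succ_F (n : ℕ) (z : E) :
    D.F^[n+1] z - D.σ = D.F (D.σ + (D.F^[n] z - D.σ)) - D.σ := by
  rw [Function.iterate_succ_apply', add_sub_cancel]

/-- points whose forward orbit stays in the `δ`-ball (in the adapted norm)
contract geometrically -/
lemma stay_contract (z : E) (hz : ∀ n : ℕ, D.an (D.F^[n] z - D.σ) ≤ D.δ) :
    ∀ n : ℕ, D.an (D.F^[n] z - D.σ) ≤ (D.μ + D.ε)^n * D.an (z - D.σ) := by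
  set h : ℕ → E := fun n => D.F^[n] z - D.σ with hdef
  have hstep : ∀ n, h (n+1) = D.F (D.σ + h n) - D.σ := fun n => D.iter_succ_F n z
  -- never u-dominant
  have hdom : ∀ n, D.NU (h n) ≤ D.NS (h n) := by
    by_contra hc
    push_neg at hc
    obtain ⟨n, hn⟩ := hc
    set γ := D.μ⁻¹ - D.ε with hγ
    have hγpos : 0 < γ := lt_trans one_pos D.hγ1
    have key : ∀ k : ℕ, γ^k * D.NU (h n) ≤ D.NU (h (n+k)) ∧
        D.NS (h (n+k)) < D.NU (h (n+k)) := by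
      intro k
      induction k with
      | zero => simpa using hn
      | succ k ih =>
        obtain ⟨ih1, ih2⟩ := ih
        have hanU : D.an (h (n+k)) = D.NU (h (n+k)) := max_eq_right ih2.le
        have hδk := hz (n+k)
        have hU := D.stepF_U (h (n+k)) hδk
        have hS := D.stepF_S (h (n+k)) hδk
        rw [← hstep] at hU hS
        have hUn : (n+k).succ = n + (k+1) := by omega
        rw [show (n+k)+1 = n + (k+1) by omega] at hU hS
        have hanr : max (D.NS (h (n+k))) (D.NU (h (n+k))) = D.NU (h (n+k)) :=
          max_eq_right ih2.le
        rw [hanr] at hU hS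
        constructor
        · have h1 : γ * D.NU (h (n+k)) ≤ D.NU (h (n+(k+1))) := by
            rw [hγ]; linarith
          calc γ^(k+1) * D.NU (h n) = γ * (γ^k * D.NU (h n)) := by ring
            _ ≤ γ * D.NU (h (n+k)) := by
                apply mul_le_mul_of_nonneg_left ih1 hγpos.le
            _ ≤ D.NU (h (n+(k+1))) := h1
        · have hNUpos : 0 < D.NU (h (n+k)) := lt_of_le_of_lt (D.NS_nonneg _) ih2
          have h2 : D.NS (h (n+(k+1))) < (D.μ + D.ε) * D.NU (h (n+k)) := by
            have : D.μ * D.NS (h (n+k)) < D.μ * D.NU (h (n+k)) :=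
              mul_lt_mul_of_pos_left ih2 D.hμ0
            linarith
          have h3 : (D.μ + D.ε) * D.NU (h (n+k)) ≤ γ * D.NU (h (n+k)) :=
            mul_le_mul_of_nonneg_right (hγ ▸ D.hcone) hNUpos.le
          have h4 : γ * D.NU (h (n+k)) ≤ D.NU (h (n+(k+1))) := by
            rw [hγ]; linarith
          linarith
    have hpos : 0 < D.NU (h n) := lt_of_le_of_lt (D.NS_nonneg _) hn
    obtain ⟨k, hk⟩ := pow_unbounded_of_one_lt (D.δ / D.NU (h n)) D.hγ1
    have h1 := (key k).1
    have h2 : D.NU (h (n+k)) ≤ D.δ := le_trans (le_max_right _ _) (hz (n+k))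
    rw [div_lt_iff₀ hpos] at hk
    rw [hγ] at h1
    nlinarith
  -- one-step contraction
  have hone : ∀ n, D.an (h (n+1)) ≤ (D.μ + D.ε) * D.an (h n) := by
    intro n
    have e1 : D.an (h (n+1)) = D.NS (h (n+1)) := max_eq_left (hdom (n+1))
    have hS := D.stepF_S (h n) (hz n)
    rw [← hstep] at hS
    have e2 : max (D.NS (h n)) (D.NU (h n)) = D.NS (h n) := max_eq_left (hdom n)
    rw [e2] at hS
    have e3 : D.NS (h n) ≤ D.an (h n) := le_max_left _ _
    have hν : 0 ≤ D.μ + D.ε := by linarith [D.hμ0, D.hε]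
    rw [e1]
    calc D.NS (h (n+1)) ≤ D.μ * D.NS (h n) + D.ε * D.NS (h n) := hS
      _ = (D.μ + D.ε) * D.NS (h n) := by ring
      _ ≤ (D.μ + D.ε) * D.an (h n) := mul_le_mul_of_nonneg_left e3 hν
  intro n
  induction n with
  | zero => simp [hdef, an]
  | succ n ih =>
    calc D.an (h (n+1)) ≤ (D.μ + D.ε) * D.an (h n) := hone n
      _ ≤ (D.μ + D.ε) * ((D.μ + D.ε)^n * D.an (z - D.σ)) := by
          apply mul_le_mul_of_nonneg_left ih (by linarith [D.hμ0, D.hε])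
      _ = (D.μ + D.ε)^(n+1) * D.an (z - D.σ) := by ring

/-- growth bound along backward iterates that stay in the ball -/
lemma grow_iterG (z : E) (m : ℕ) (hm : ∀ i < m, D.an (D.G^[i] z - D.σ) ≤ D.δ) :
    D.an (D.G^[m] z - D.σ) ≤ D.M₁^m * D.an (z - D.σ) := by
  induction m with
  | zero => simp [an]
  | succ m ih =>
    have hm' : ∀ i < m, D.an (D.G^[i] z - D.σ) ≤ D.δ := fun i hi => hm i (by omega)
    have ihm := ih hm'
    have hlast : D.an (D.G^[m] z - D.σ) ≤ D.δ := hm m (by omega)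
    have hg := D.growG (D.G^[m] z - D.σ) hlast
    rw [add_sub_cancel] at hg
    have e1 : D.G^[m+1] z = D.G (D.G^[m] z) := Function.iterate_succ_apply' _ _ _
    rw [e1]
    calc D.an (D.G (D.G^[m] z) - D.σ) ≤ D.M₁ * D.an (D.G^[m] z - D.σ) := hg
      _ ≤ D.M₁ * (D.M₁^m * D.an (z - D.σ)) :=
          mul_le_mul_of_nonneg_left ihm (by linarith [D.hM₁])
      _ = D.M₁^(m+1) * D.an (z - D.σ) := by ring


/-- from a sequence of backward-escaping points accumulating on `σ`, compactness
produces a point away from `σ` whose forward orbit stays in the ball -/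
lemma exists_forward_stayer (Λ : Set E) (hΛc : IsCompact Λ)
    (hGΛ : Set.MapsTo D.G Λ Λ)
    (hz : ∀ j : ℕ, ∃ z ∈ Λ, D.an (z - D.σ) ≤ min D.δ (1/(j+1)) ∧
      ∃ k : ℕ, D.δ < D.an (D.G^[k] z - D.σ)) :
    ∃ q ∈ Λ, D.δ ≤ D.an (q - D.σ) ∧ ∀ n : ℕ, 1 ≤ n → D.an (D.F^[n] q - D.σ) ≤ D.δ := by
  classical
  choose z hzΛ hzan hzesc using hz
  have hex : ∀ j, ∃ k : ℕ, D.δ < D.an (D.G^[k] (z j) - D.σ) := hzesc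
  set l : ℕ → ℕ := fun j => Nat.find (hex j) with hl
  have hlt : ∀ j, D.δ < D.an (D.G^[l j] (z j) - D.σ) := fun j => Nat.find_spec (hex j)
  have hmin : ∀ j, ∀ i < l j, D.an (D.G^[i] (z j) - D.σ) ≤ D.δ := by
    intro j i hi
    have := Nat.find_min (hex j) hi
    linarith [not_lt.mp this]
  have hl1 : ∀ j, 1 ≤ l j := by
    intro j
    by_contra hc
    push_neg at hc
    interval_cases h : l j
    · have := hlt j
      simp only [h, Function.iterate_zero, id_eq] at this
      exact absurd (le_trans (hzan j) (min_le_left _ _)) (not_le.mpr this)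
  -- the escape points
  set q : ℕ → E := fun j => D.G^[l j] (z j) with hq
  have hqΛ : ∀ j, q j ∈ Λ := fun j => (hGΛ.iterate (l j)) (hzΛ j)
  obtain ⟨Q, hQΛ, ψ, hψ, hconv⟩ := hΛc.tendsto_subseq hqΛ
  -- escape times tend to infinity
  have hlbig : ∀ K : ℕ, ∃ J : ℕ, ∀ j ≥ J, K + 1 ≤ l (ψ j) := by
    intro K
    obtain ⟨J, hJ⟩ := exists_nat_ge (D.M₁^(K+1) / D.δ)
    refine ⟨J, fun j hj => ?_⟩
    by_contra hc
    push_neg at hc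
    have hlK : l (ψ j) ≤ K := by omega
    have hgrow := D.grow_iterG (z (ψ j)) (l (ψ j)) (hmin (ψ j))
    have hM1 : D.M₁^(l (ψ j)) ≤ D.M₁^(K+1) :=
      pow_le_pow_right₀ D.hM₁ (by omega)
    have hzb : D.an (z (ψ j) - D.σ) ≤ 1/(ψ j + 1) :=
      le_trans (hzan (ψ j)) (min_le_right _ _)
    have h1 : D.δ < D.M₁^(K+1) * (1/(ψ j + 1)) := by
      have h2 := hlt (ψ j)
      have h3 : D.M₁^(l (ψ j)) * D.an (z (ψ j) - D.σ) ≤ D.M₁^(K+1) * (1/(ψ j+1)) := by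
        apply mul_le_mul hM1 hzb (D.an_nonneg _) (pow_nonneg (by linarith [D.hM₁]) _)
      linarith
    have hψj : (J:ℝ) ≤ ψ j := by
      have : j ≤ ψ j := hψ.le_apply
      have : J ≤ ψ j := le_trans hj this
      exact_mod_cast this
    have hpos : (0:ℝ) < (ψ j : ℝ) + 1 := by positivity
    rw [mul_one_div, lt_div_iff₀ hpos] at h1
    have h6 : D.M₁^(K+1) ≤ (J:ℝ) * D.δ := by
      rw [div_le_iff₀ D.hδ] at hJ
      exact hJ
    have h5 : (J:ℝ) * D.δ ≤ ((ψ j : ℝ)) * D.δ :=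
      mul_le_mul_of_nonneg_right hψj D.hδ.le
    nlinarith [D.hδ]
  refine ⟨Q, hQΛ, ?_, ?_⟩
  · -- δ ≤ an (Q - σ)
    have hcont : Continuous fun x => D.an (x - D.σ) :=
      D.an_continuous.comp (continuous_id.sub continuous_const)
    have := (hcont.continuousAt (x := Q)).tendsto.comp hconv
    refine le_of_tendsto_of_tendsto tendsto_const_nhds this ?_
    filter_upwards with j
    exact (hlt (ψ j)).le
  · intro n hn
    have hcont : Continuous fun x => D.an (D.F^[n] x - D.σ) := by
      apply D.an_continuous.comp
      exact ((D.contF.iterate n).sub continuous_const)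
    have hten := (hcont.continuousAt (x := Q)).tendsto.comp hconv
    obtain ⟨J, hJ⟩ := hlbig n
    refine le_of_tendsto_of_tendsto hten tendsto_const_nhds ?_
    rw [Filter.EventuallyLE, Filter.eventually_atTop]
    refine ⟨J, fun j hj => ?_⟩
    have hlj := hJ j hj
    simp only [Function.comp_apply]
    have e1 : D.F^[n] (q (ψ j)) = D.G^[l (ψ j) - n] (z (ψ j)) := by
      have e2 : D.G^[l (ψ j)] (z (ψ j)) = D.G^[n] (D.G^[l (ψ j) - n] (z (ψ j))) := by
        rw [← Function.iterate_add_apply]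
        congr 1
        omega
      rw [hq]
      simp only []
      rw [e2, D.iterate_right_inv]
    rw [e1]
    exact hmin (ψ j) _ (by omega)

/-- chains with small jumps ending at `σ` in a backward-trapping region start near `σ` -/
lemma chain_down (Λ : Set E) (ρ' c : ℝ) (hc : 0 < c) (hρδ : ρ' ≤ D.δ)
    (hcρ : c * (2 - (D.μ + D.ε)) ≤ ρ')
    (trap : ∀ z ∈ Λ, D.an (z - D.σ) ≤ ρ' → ∀ k : ℕ, D.an (D.G^[k] z - D.σ) ≤ D.δ)
    (hFΛ : Set.MapsTo D.F Λ Λ)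
    (n : ℕ) (y : ℕ → E) (m : ℕ → ℕ)
    (hm : ∀ i < n, 1 ≤ m i) (hyΛ : ∀ i ≤ n, y i ∈ Λ)
    (hjump : ∀ i < n, D.an (D.F^[m i] (y i) - y (i+1)) ≤ c * (1 - (D.μ + D.ε)))
    (hend : D.an (y n - D.σ) ≤ c) : D.an (y 0 - D.σ) ≤ c := by
  set ν := D.μ + D.ε with hν
  have hν0 : 0 ≤ ν := by rw [hν]; linarith [D.hμ0.le, D.hε.le]
  have hν1 : ν < 1 := D.hν1
  have key : ∀ i : ℕ, i ≤ n → D.an (y (n - i) - D.σ) ≤ c := by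
    intro i
    induction i with
    | zero => intro _; simpa using hend
    | succ i ih =>
      intro hi
      have hprev : D.an (y (n - i) - D.σ) ≤ c := ih (by omega)
      set j := n - (i+1) with hj
      have hjn : j < n := by omega
      have hjsucc : j + 1 = n - i := by omega
      set w := D.F^[m j] (y j) with hw
      have hwΛ : w ∈ Λ := (hFΛ.iterate (m j)) (hyΛ j (by omega))
      have hwan2 : D.an (w - D.σ) ≤ c * (2 - ν) := by
        have h1 := D.an_sub_triangle w (y (j+1)) D.σ
        have h2 := hjump j hjn
        have hprev' : D.an (y (j+1) - D.σ) ≤ c := by rw [hjsucc]; exact hprev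
        calc D.an (w - D.σ) ≤ D.an (w - y (j+1)) + D.an (y (j+1) - D.σ) := h1
          _ ≤ c * (1 - ν) + c := add_le_add h2 hprev'
          _ = c * (2 - ν) := by ring
      have hwan : D.an (w - D.σ) ≤ ρ' := le_trans hwan2 hcρ
      -- w backward-stays, so contracts backward
      have hstay : ∀ k : ℕ, D.symm.an (D.symm.F^[k] w - D.symm.σ) ≤ D.symm.δ := by
        intro k
        rw [D.an_symm]
        exact trap w hwΛ hwan k
      have hcontr := D.symm.stay_contract w hstay (m j)
      rw [D.an_symm, D.an_symm] at hcontr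
      have e1 : D.symm.F^[m j] w = y j := by
        show D.G^[m j] w = y j
        rw [hw, D.iterate_left_inv]
      rw [e1] at hcontr
      have e0 : D.symm.σ = D.σ := rfl
      rw [e0] at hcontr
      have e2 : D.symm.μ + D.symm.ε = ν := rfl
      rw [e2] at hcontr
      have hpow : ν^(m j) ≤ ν := by
        calc ν^(m j) ≤ ν^1 := pow_le_pow_of_le_one hν0 hν1.le (hm j hjn)
          _ = ν := pow_one ν
      have hfin : D.an (y j - D.σ) ≤ c := by
        have h3 : ν^(m j) * D.an (w - D.σ) ≤ ν * (c * (2 - ν)) := by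
          apply mul_le_mul hpow hwan2 (D.an_nonneg _) hν0
        have h4 : ν * (c * (2 - ν)) ≤ c := by nlinarith [sq_nonneg (1 - ν)]
        linarith
      rw [hj] at hfin ⊢
      exact hfin
  have := key n (le_refl n)
  simpa using this

/-- chains with small jumps starting at `σ` in a forward-trapping region stay near `σ` -/
lemma chain_up (Λ : Set E) (ρ' c : ℝ) (hc : 0 < c) (hρδ : ρ' ≤ D.δ) (hcρ : c ≤ ρ')
    (trap : ∀ z ∈ Λ, D.an (z - D.σ) ≤ ρ' → ∀ k : ℕ, D.an (D.F^[k] z - D.σ) ≤ D.δ)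
    (n : ℕ) (y : ℕ → E) (m : ℕ → ℕ)
    (hm : ∀ i < n, 1 ≤ m i) (hyΛ : ∀ i ≤ n, y i ∈ Λ)
    (hjump : ∀ i < n, D.an (D.F^[m i] (y i) - y (i+1)) ≤ c * (1 - (D.μ + D.ε)))
    (hstart : D.an (y 0 - D.σ) ≤ c) : ∀ i ≤ n, D.an (y i - D.σ) ≤ c := by
  set ν := D.μ + D.ε with hν
  have hν0 : 0 ≤ ν := by rw [hν]; linarith [D.hμ0.le, D.hε.le]
  have hν1 : ν < 1 := D.hν1
  intro i
  induction i with
  | zero => intro _; exact hstart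
  | succ i ih =>
    intro hi
    have hprev := ih (by omega)
    have hyiΛ := hyΛ i (by omega)
    have hcontr := D.stay_contract (y i)
      (trap (y i) hyiΛ (le_trans hprev hcρ)) (m i)
    have hpow : ν^(m i) ≤ ν := by
      calc ν^(m i) ≤ ν^1 := pow_le_pow_of_le_one hν0 hν1.le (hm i (by omega))
        _ = ν := pow_one ν
    have h3 : D.an (D.F^[m i] (y i) - D.σ) ≤ ν * c := by
      calc D.an (D.F^[m i] (y i) - D.σ) ≤ ν^(m i) * D.an (y i - D.σ) := hcontr
        _ ≤ ν * c := mul_le_mul hpow hprev (D.an_nonneg _) hν0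
    have h4 := D.an_sub_triangle (y (i+1)) (D.F^[m i] (y i)) D.σ
    have h5 : D.an (y (i+1) - D.F^[m i] (y i)) ≤ c * (1 - ν) := by
      have := hjump i (by omega)
      calc D.an (y (i+1) - D.F^[m i] (y i))
          = D.an (-(D.F^[m i] (y i) - y (i+1))) := by rw [neg_sub]
        _ = D.an (D.F^[m i] (y i) - y (i+1)) := D.an_neg _
        _ ≤ c * (1 - ν) := this
    calc D.an (y (i+1) - D.σ) ≤ D.an (y (i+1) - D.F^[m i] (y i)) +
          D.an (D.F^[m i] (y i) - D.σ) := h4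
      _ ≤ c * (1 - ν) + ν * c := add_le_add h5 h3
      _ = c := by ring

end DHyp


section RawN

variable {E : Type*} [NormedAddCommGroup E] [InnerProductSpace ℝ E] [FiniteDimensional ℝ E]

/-- adapted seminorm associated to a one-parameter family of operators -/
noncomputable def rawN (lam : ℝ) (T : ℝ → E →L[ℝ] E) (w : E) : ℝ :=
  ⨆ n : ℕ, Real.exp (lam * n) * ‖T (n:ℝ) w‖

variable {lam C : ℝ} {T : ℝ → E →L[ℝ] E} {V : Submodule ℝ E}

lemma rawN_bdd (hcontr : ∀ n : ℕ, ∀ w ∈ V, ‖T (n:ℝ) w‖ ≤ C * Real.exp (-lam * n) * ‖w‖)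
    {w : E} (hw : w ∈ V) :
    BddAbove (Set.range fun n : ℕ => Real.exp (lam * n) * ‖T (n:ℝ) w‖) := by
  refine ⟨C * ‖w‖, ?_⟩
  rintro _ ⟨n, rfl⟩
  have h1 := hcontr n w hw
  have h2 : Real.exp (lam * n) * ‖T (n:ℝ) w‖ ≤
      Real.exp (lam * n) * (C * Real.exp (-lam * n) * ‖w‖) :=
    mul_le_mul_of_nonneg_left h1 (Real.exp_pos _).le
  have h3 : Real.exp (lam * n) * Real.exp (-lam * n) = 1 := by
    rw [← Real.exp_add]; ring_nf; exact Real.exp_zero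
  calc Real.exp (lam * n) * ‖T (n:ℝ) w‖
      ≤ Real.exp (lam * n) * (C * Real.exp (-lam * n) * ‖w‖) := h2
    _ = (Real.exp (lam * n) * Real.exp (-lam * n)) * (C * ‖w‖) := by ring
    _ = C * ‖w‖ := by rw [h3, one_mul]

lemma le_rawN (hT0 : T 0 = ContinuousLinearMap.id ℝ E)
    (hcontr : ∀ n : ℕ, ∀ w ∈ V, ‖T (n:ℝ) w‖ ≤ C * Real.exp (-lam * n) * ‖w‖)
    {w : E} (hw : w ∈ V) : ‖w‖ ≤ rawN lam T w := by
  have := le_ciSup (rawN_bdd hcontr hw) 0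
  simpa [hT0, rawN] using this

lemma rawN_le (hcontr : ∀ n : ℕ, ∀ w ∈ V, ‖T (n:ℝ) w‖ ≤ C * Real.exp (-lam * n) * ‖w‖)
    {w : E} (hw : w ∈ V) : rawN lam T w ≤ C * ‖w‖ := by
  apply ciSup_le
  intro n
  have h1 := hcontr n w hw
  have h3 : Real.exp (lam * n) * Real.exp (-lam * n) = 1 := by
    rw [← Real.exp_add]; ring_nf; exact Real.exp_zero
  calc Real.exp (lam * n) * ‖T (n:ℝ) w‖
      ≤ Real.exp (lam * n) * (C * Real.exp (-lam * n) * ‖w‖) :=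
        mul_le_mul_of_nonneg_left h1 (Real.exp_pos _).le
    _ = (Real.exp (lam * n) * Real.exp (-lam * n)) * (C * ‖w‖) := by ring
    _ = C * ‖w‖ := by rw [h3, one_mul]

lemma rawN_nonneg (w : E) : 0 ≤ rawN lam T w :=
  Real.iSup_nonneg fun n => by positivity

lemma rawN_add (hcontr : ∀ n : ℕ, ∀ w ∈ V, ‖T (n:ℝ) w‖ ≤ C * Real.exp (-lam * n) * ‖w‖)
    {a b : E} (ha : a ∈ V) (hb : b ∈ V) :
    rawN lam T (a + b) ≤ rawN lam T a + rawN lam T b := by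
  apply ciSup_le
  intro n
  have h1 : Real.exp (lam * n) * ‖T (n:ℝ) (a + b)‖ ≤
      Real.exp (lam * n) * ‖T (n:ℝ) a‖ + Real.exp (lam * n) * ‖T (n:ℝ) b‖ := by
    rw [map_add]
    have := norm_add_le (T (n:ℝ) a) (T (n:ℝ) b)
    nlinarith [Real.exp_pos (lam * n)]
  exact le_trans h1 (add_le_add (le_ciSup (rawN_bdd hcontr ha) n)
    (le_ciSup (rawN_bdd hcontr hb) n))

lemma rawN_neg (a : E) : rawN lam T (-a) = rawN lam T a := by
  unfold rawN; simp

lemma rawN_contract (hadd : ∀ n : ℕ, T ((n:ℝ) + 1) = (T (n:ℝ)).comp (T 1))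
    (hcontr : ∀ n : ℕ, ∀ w ∈ V, ‖T (n:ℝ) w‖ ≤ C * Real.exp (-lam * n) * ‖w‖)
    {w : E} (hw : w ∈ V) :
    rawN lam T (T 1 w) ≤ Real.exp (-lam) * rawN lam T w := by
  apply ciSup_le
  intro n
  have e : T (n:ℝ) (T 1 w) = T (((n+1:ℕ)):ℝ) w := by
    push_cast
    rw [hadd n]; rfl
  rw [e]
  have e2 : Real.exp (lam * n) =
      Real.exp (-lam) * Real.exp (lam * ((n+1:ℕ):ℝ)) := by
    rw [← Real.exp_add]
    congr 1
    push_cast; ring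
  rw [e2, mul_assoc]
  apply mul_le_mul_of_nonneg_left _ (Real.exp_pos _).le
  exact le_ciSup (rawN_bdd hcontr hw) (n+1)

end RawN


namespace FlowPkg

variable {E : Type*} [NormedAddCommGroup E] [InnerProductSpace ℝ E] [FiniteDimensional ℝ E]
variable (P : FlowPkg E) {σ : E}

set_option maxHeartbeats 3000000 in
lemma exists_DHyp (hs : HypSing P σ) :
    ∃ D : DHyp E, D.F = P.φ 1 ∧ D.G = P.φ (-1) ∧ D.σ = σ := by
  classical
  have hfix : ∀ t, P.φ t σ = σ := P.fixed hs.zero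
  obtain ⟨Es, Eu, hzero, hcompl, hinvs, hinvu, C, lam, hC1, hlam, hcontr, hexpand⟩ := hs
  -- projections onto the splitting
  set prs : E →ₗ[ℝ] E := (Submodule.subtype Es).comp (Es.projectionOnto Eu hcompl)
    with hprs
  set pru : E →ₗ[ℝ] E := (Submodule.subtype Eu).comp (Eu.projectionOnto Es hcompl.symm)
    with hpru
  have hsum : ∀ x : E, prs x + pru x = x := fun x =>
    Submodule.projection_add_projection_eq_self hcompl x
  have hprs_mem : ∀ x, prs x ∈ Es := fun x => (Es.projectionOnto Eu hcompl x).2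
  have hpru_mem : ∀ x, pru x ∈ Eu := fun x => (Eu.projectionOnto Es hcompl.symm x).2
  have hprs_eq : ∀ w ∈ Es, prs w = w := by
    intro w hw
    show ((Es.projectionOnto Eu hcompl w : Es) : E) = w
    rw [show w = ((⟨w, hw⟩ : Es) : E) from rfl, Submodule.projectionOnto_apply_left]
  have hprs_zero : ∀ w ∈ Eu, prs w = 0 := by
    intro w hw
    show ((Es.projectionOnto Eu hcompl w : Es) : E) = 0
    rw [Submodule.projectionOnto_apply_of_mem_right hcompl hw]; rfl
  have hpru_eq : ∀ w ∈ Eu, pru w = w := by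
    intro w hw
    show ((Eu.projectionOnto Es hcompl.symm w : Eu) : E) = w
    rw [show w = ((⟨w, hw⟩ : Eu) : E) from rfl, Submodule.projectionOnto_apply_left]
  have hpru_zero : ∀ w ∈ Es, pru w = 0 := by
    intro w hw
    show ((Eu.projectionOnto Es hcompl.symm w : Eu) : E) = 0
    rw [Submodule.projectionOnto_apply_of_mem_right hcompl.symm hw]; rfl
  -- commutation of projections with the linearized flow
  have hcomm_s : ∀ (t : ℝ) (x : E), prs (P.Dφ t σ x) = P.Dφ t σ (prs x) := by
    intro t x
    conv_lhs => rw [← hsum x]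
    rw [map_add, map_add, hprs_eq _ (hinvs t _ (hprs_mem x)),
      hprs_zero _ (hinvu t _ (hpru_mem x)), add_zero]
  have hcomm_u : ∀ (t : ℝ) (x : E), pru (P.Dφ t σ x) = P.Dφ t σ (pru x) := by
    intro t x
    conv_lhs => rw [← hsum x]
    rw [map_add, map_add, hpru_eq _ (hinvu t _ (hpru_mem x)),
      hpru_zero _ (hinvs t _ (hprs_mem x)), zero_add]
  -- operator families
  set Ts : ℝ → E →L[ℝ] E := fun t => P.Dφ t σ with hTs
  set Tu : ℝ → E →L[ℝ] E := fun t => P.Dφ (-t) σ with hTu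
  have hTs0 : Ts 0 = ContinuousLinearMap.id ℝ E := P.Dphi_zero σ
  have hTu0 : Tu 0 = ContinuousLinearMap.id ℝ E := by
    show P.Dφ (-0) σ = _
    rw [neg_zero]; exact P.Dphi_zero σ
  have hTsadd : ∀ n : ℕ, Ts ((n:ℝ) + 1) = (Ts (n:ℝ)).comp (Ts 1) :=
    fun n => P.Dphi_comp hfix (n:ℝ) 1
  have hTuadd : ∀ n : ℕ, Tu ((n:ℝ) + 1) = (Tu (n:ℝ)).comp (Tu 1) := by
    intro n
    show P.Dφ (-((n:ℝ)+1)) σ = (P.Dφ (-(n:ℝ)) σ).comp (P.Dφ (-1) σ)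
    rw [show -((n:ℝ)+1) = -(n:ℝ) + -1 by ring]
    exact P.Dphi_comp hfix (-(n:ℝ)) (-1)
  have hTscontr : ∀ n : ℕ, ∀ w ∈ Es, ‖Ts (n:ℝ) w‖ ≤ C * Real.exp (-lam * n) * ‖w‖ :=
    fun n w hw => hcontr (n:ℝ) (by positivity) w hw
  have hTucontr : ∀ n : ℕ, ∀ w ∈ Eu, ‖Tu (n:ℝ) w‖ ≤ C * Real.exp (-lam * n) * ‖w‖ :=
    fun n w hw => hexpand (n:ℝ) (by positivity) w hw
  -- the A and B operators
  set A : E →L[ℝ] E := P.Dφ 1 σ with hA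
  set B : E →L[ℝ] E := P.Dφ (-1) σ with hB
  have hBA : ∀ x, B (A x) = x := by
    intro x
    have := P.Dphi_comp hfix (-1) 1
    rw [neg_add_cancel, P.Dphi_zero] at this
    have h2 := congrArg (fun (f : E →L[ℝ] E) => f x) this
    simpa using h2.symm
  have hAB : ∀ x, A (B x) = x := by
    intro x
    have := P.Dphi_comp hfix 1 (-1)
    rw [add_neg_cancel, P.Dphi_zero] at this
    have h2 := congrArg (fun (f : E →L[ℝ] E) => f x) this
    simpa using h2.symm
  -- the component seminorms
  set NS : E → ℝ := fun h => rawN lam Ts (prs h) with hNS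
  set NU : E → ℝ := fun h => rawN lam Tu (pru h) with hNU
  have hNS_contract : ∀ h : E, NS (A h) ≤ Real.exp (-lam) * NS h := by
    intro h
    show rawN lam Ts (prs (A h)) ≤ _
    rw [hcomm_s 1 h]
    exact rawN_contract hTsadd hTscontr (hprs_mem h)
  have hNU_contract : ∀ h : E, NU (B h) ≤ Real.exp (-lam) * NU h := by
    intro h
    show rawN lam Tu (pru (B h)) ≤ _
    rw [show B = Tu 1 by rfl, show pru (Tu 1 h) = Tu 1 (pru h) from hcomm_u (-1) h]
    exact rawN_contract hTuadd hTucontr (hpru_mem h)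
  -- constants
  set μ := Real.exp (-lam) with hμ
  have hμ0 : 0 < μ := Real.exp_pos _
  have hμ1 : μ < 1 := by
    rw [hμ, Real.exp_lt_one_iff]; linarith
  have hμinv : 1 < μ⁻¹ := (one_lt_inv₀ hμ0).mpr hμ1
  have hmm : μ * μ⁻¹ = 1 := mul_inv_cancel₀ (ne_of_gt hμ0)
  set ε := min ((1 - μ)/2) ((μ⁻¹ - μ)/4) with hε
  have hεpos : 0 < ε := lt_min (by linarith) (by linarith)
  have hεle1 : ε ≤ 1 := le_trans (min_le_left _ _) (by linarith)
  have hν1 : μ + ε < 1 := by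
    have := min_le_left ((1 - μ)/2) ((μ⁻¹ - μ)/4)
    have h2 : ε ≤ (1 - μ)/2 := this
    linarith
  have hγ1 : 1 < μ⁻¹ - ε := by
    have h2 : ε ≤ (μ⁻¹ - μ)/4 := min_le_right _ _
    nlinarith
  have hcone : μ + ε ≤ μ⁻¹ - ε := by
    have h2 : ε ≤ (μ⁻¹ - μ)/4 := min_le_right _ _
    linarith
  -- norm comparison constants
  set Psc : E →L[ℝ] E := LinearMap.toContinuousLinearMap prs with hPsc
  set Puc : E →L[ℝ] E := LinearMap.toContinuousLinearMap pru with hPuc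
  have hprs_norm : ∀ x : E, ‖prs x‖ ≤ ‖Psc‖ * ‖x‖ := fun x => Psc.le_opNorm x
  have hpru_norm : ∀ x : E, ‖pru x‖ ≤ ‖Puc‖ * ‖x‖ := fun x => Puc.le_opNorm x
  set C₂ := 1 + C * (‖Psc‖ + ‖Puc‖) with hC₂def
  have hCpos : 0 < C := lt_of_lt_of_le one_pos hC1
  have hC₂ : 1 ≤ C₂ := by
    rw [hC₂def]
    have := norm_nonneg Psc
    have := norm_nonneg Puc
    nlinarith
  have hC₂pos : 0 < C₂ := lt_of_lt_of_le one_pos hC₂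
  have han_le : ∀ h : E, max (NS h) (NU h) ≤ C₂ * ‖h‖ := by
    intro h
    have h1 : NS h ≤ C₂ * ‖h‖ := by
      have h2 : NS h ≤ C * ‖prs h‖ := rawN_le hTscontr (hprs_mem h)
      have h3 : C * ‖prs h‖ ≤ C * (‖Psc‖ * ‖h‖) :=
        mul_le_mul_of_nonneg_left (hprs_norm h) hCpos.le
      have h4 : C * (‖Psc‖ * ‖h‖) ≤ C₂ * ‖h‖ := by
        rw [hC₂def]
        have h5 : 0 ≤ C * ‖Puc‖ * ‖h‖ :=
          mul_nonneg (mul_nonneg hCpos.le (norm_nonneg _)) (norm_nonneg _)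
        have h6 := norm_nonneg h
        nlinarith
      linarith
    have h1' : NU h ≤ C₂ * ‖h‖ := by
      have h2 : NU h ≤ C * ‖pru h‖ := rawN_le hTucontr (hpru_mem h)
      have h3 : C * ‖pru h‖ ≤ C * (‖Puc‖ * ‖h‖) :=
        mul_le_mul_of_nonneg_left (hpru_norm h) hCpos.le
      have h4 : C * (‖Puc‖ * ‖h‖) ≤ C₂ * ‖h‖ := by
        rw [hC₂def]
        have h5 : 0 ≤ C * ‖Psc‖ * ‖h‖ :=
          mul_nonneg (mul_nonneg hCpos.le (norm_nonneg _)) (norm_nonneg _)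
        have h6 := norm_nonneg h
        nlinarith
      linarith
    exact max_le h1 h1'
  have hnorm_le : ∀ h : E, ‖h‖ ≤ 2 * max (NS h) (NU h) := by
    intro h
    have h1 : ‖h‖ ≤ ‖prs h‖ + ‖pru h‖ := by
      conv_lhs => rw [← hsum h]
      exact norm_add_le _ _
    have h2 : ‖prs h‖ ≤ NS h := le_rawN hTs0 hTscontr (hprs_mem h)
    have h3 : ‖pru h‖ ≤ NU h := le_rawN hTu0 hTucontr (hpru_mem h)
    have h4 : NS h ≤ max (NS h) (NU h) := le_max_left _ _
    have h5 : NU h ≤ max (NS h) (NU h) := le_max_right _ _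
    linarith
  -- seminorm algebra
  have hNS_add : ∀ a b : E, NS (a + b) ≤ NS a + NS b := by
    intro a b
    show rawN lam Ts (prs (a + b)) ≤ _
    rw [map_add]
    exact rawN_add hTscontr (hprs_mem a) (hprs_mem b)
  have hNU_add : ∀ a b : E, NU (a + b) ≤ NU a + NU b := by
    intro a b
    show rawN lam Tu (pru (a + b)) ≤ _
    rw [map_add]
    exact rawN_add hTucontr (hpru_mem a) (hpru_mem b)
  have hNS_neg : ∀ a : E, NS (-a) = NS a := by
    intro a
    show rawN lam Ts (prs (-a)) = rawN lam Ts (prs a)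
    rw [map_neg, rawN_neg]
  have hNU_neg : ∀ a : E, NU (-a) = NU a := by
    intro a
    show rawN lam Tu (pru (-a)) = rawN lam Tu (pru a)
    rw [map_neg, rawN_neg]
  have hNS_nonneg : ∀ a : E, 0 ≤ NS a := fun a => rawN_nonneg _
  have hNU_nonneg : ∀ a : E, 0 ≤ NU a := fun a => rawN_nonneg _
  -- expansion lower bounds
  have hNU_expand : ∀ h : E, μ⁻¹ * NU h ≤ NU (A h) := by
    intro h
    have h1 : NU (B (A h)) ≤ μ * NU (A h) := hNU_contract (A h)
    rw [hBA h] at h1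
    calc μ⁻¹ * NU h ≤ μ⁻¹ * (μ * NU (A h)) := mul_le_mul_of_nonneg_left h1 (by positivity)
      _ = (μ * μ⁻¹) * NU (A h) := by ring
      _ = NU (A h) := by rw [hmm, one_mul]
  have hNS_expand : ∀ h : E, μ⁻¹ * NS h ≤ NS (B h) := by
    intro h
    have h1 : NS (A (B h)) ≤ μ * NS (B h) := hNS_contract (B h)
    rw [hAB h] at h1
    calc μ⁻¹ * NS h ≤ μ⁻¹ * (μ * NS (B h)) := mul_le_mul_of_nonneg_left h1 (by positivity)
      _ = (μ * μ⁻¹) * NS (B h) := by ring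
      _ = NS (B h) := by rw [hmm, one_mul]
  -- differentiability at σ, quantitative
  set c := ε / (2 * C₂) with hcdef
  have hcpos : 0 < c := by positivity
  obtain ⟨δ₁, hδ₁, hlitF⟩ : ∃ δ₁ > (0:ℝ), ∀ h : E, ‖h‖ < δ₁ →
      ‖P.φ 1 (σ + h) - σ - A h‖ ≤ c * ‖h‖ := by
    have h0 := (hasFDerivAt_iff_isLittleO_nhds_zero.mp (P.deriv_space 1 σ)).def hcpos
    rw [Metric.eventually_nhds_iff] at h0
    obtain ⟨δ₁, hδ₁, h1⟩ := h0
    refine ⟨δ₁, hδ₁, fun h hh => ?_⟩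
    have h2 := h1 (show dist h 0 < δ₁ by rwa [dist_zero_right])
    simpa [hfix 1] using h2
  obtain ⟨δ₂, hδ₂, hlitG⟩ : ∃ δ₂ > (0:ℝ), ∀ h : E, ‖h‖ < δ₂ →
      ‖P.φ (-1) (σ + h) - σ - B h‖ ≤ c * ‖h‖ := by
    have h0 := (hasFDerivAt_iff_isLittleO_nhds_zero.mp (P.deriv_space (-1) σ)).def hcpos
    rw [Metric.eventually_nhds_iff] at h0
    obtain ⟨δ₂, hδ₂, h1⟩ := h0
    refine ⟨δ₂, hδ₂, fun h hh => ?_⟩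
    have h2 := h1 (show dist h 0 < δ₂ by rwa [dist_zero_right])
    simpa [hfix (-1)] using h2
  set δ := min δ₁ δ₂ / 3 with hδdef
  have hδpos : 0 < δ := by
    have := lt_min hδ₁ hδ₂
    positivity
  have hsmall : ∀ h : E, max (NS h) (NU h) ≤ δ → ‖h‖ < min δ₁ δ₂ := by
    intro h hh
    have h1 := hnorm_le h
    have h2 : (0:ℝ) < min δ₁ δ₂ := lt_min hδ₁ hδ₂
    rw [hδdef] at hh
    linarith
  -- remainder bounds
  have hrF : ∀ h : E, max (NS h) (NU h) ≤ δ →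
      max (NS (P.φ 1 (σ + h) - σ - A h)) (NU (P.φ 1 (σ + h) - σ - A h)) ≤
        ε * max (NS h) (NU h) := by
    intro h hh
    have h1 := hlitF h (lt_of_lt_of_le (hsmall h hh) (min_le_left _ _))
    have h2 := han_le (P.φ 1 (σ + h) - σ - A h)
    have h3 : C₂ * ‖P.φ 1 (σ + h) - σ - A h‖ ≤ C₂ * (c * ‖h‖) :=
      mul_le_mul_of_nonneg_left h1 hC₂pos.le
    have h4 : C₂ * (c * ‖h‖) = (ε / 2) * ‖h‖ := by
      rw [hcdef]; field_simp
    have h5 := hnorm_le h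
    have h6 : (ε / 2) * ‖h‖ ≤ (ε / 2) * (2 * max (NS h) (NU h)) :=
      mul_le_mul_of_nonneg_left h5 (by positivity)
    calc max (NS (P.φ 1 (σ + h) - σ - A h)) (NU (P.φ 1 (σ + h) - σ - A h))
        ≤ C₂ * ‖P.φ 1 (σ + h) - σ - A h‖ := h2
      _ ≤ C₂ * (c * ‖h‖) := h3
      _ = (ε / 2) * ‖h‖ := h4
      _ ≤ (ε / 2) * (2 * max (NS h) (NU h)) := h6
      _ = ε * max (NS h) (NU h) := by ring
  have hrG : ∀ h : E, max (NS h) (NU h) ≤ δ →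
      max (NS (P.φ (-1) (σ + h) - σ - B h)) (NU (P.φ (-1) (σ + h) - σ - B h)) ≤
        ε * max (NS h) (NU h) := by
    intro h hh
    have h1 := hlitG h (lt_of_lt_of_le (hsmall h hh) (min_le_right _ _))
    have h2 := han_le (P.φ (-1) (σ + h) - σ - B h)
    have h3 : C₂ * ‖P.φ (-1) (σ + h) - σ - B h‖ ≤ C₂ * (c * ‖h‖) :=
      mul_le_mul_of_nonneg_left h1 hC₂pos.le
    have h4 : C₂ * (c * ‖h‖) = (ε / 2) * ‖h‖ := by
      rw [hcdef]; field_simp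
    have h5 := hnorm_le h
    have h6 : (ε / 2) * ‖h‖ ≤ (ε / 2) * (2 * max (NS h) (NU h)) :=
      mul_le_mul_of_nonneg_left h5 (by positivity)
    calc max (NS (P.φ (-1) (σ + h) - σ - B h)) (NU (P.φ (-1) (σ + h) - σ - B h))
        ≤ C₂ * ‖P.φ (-1) (σ + h) - σ - B h‖ := h2
      _ ≤ C₂ * (c * ‖h‖) := h3
      _ = (ε / 2) * ‖h‖ := h4
      _ ≤ (ε / 2) * (2 * max (NS h) (NU h)) := h6
      _ = ε * max (NS h) (NU h) := by ring
  have hdecF : ∀ h : E, P.φ 1 (σ + h) - σ = A h + (P.φ 1 (σ + h) - σ - A h) := by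
    intro h; abel
  have hdecG : ∀ h : E, P.φ (-1) (σ + h) - σ = B h + (P.φ (-1) (σ + h) - σ - B h) := by
    intro h; abel
  -- operator norm growth
  set M₁ := 2 + C * (‖A‖ + ‖B‖) with hM₁def
  have hM₁ : 1 ≤ M₁ := by
    rw [hM₁def]
    have := norm_nonneg A
    have := norm_nonneg B
    nlinarith
  have hgrowA : ∀ h : E, max (NS (A h)) (NU (A h)) ≤
      max (NS h) (NU h) + C * ‖A‖ * max (NS h) (NU h) := by
    intro h
    have hmax0 : 0 ≤ max (NS h) (NU h) := le_trans (hNS_nonneg h) (le_max_left _ _)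
    have hCA : 0 ≤ C * ‖A‖ * max (NS h) (NU h) :=
      mul_nonneg (mul_nonneg hCpos.le (norm_nonneg _)) hmax0
    have h1 : NS (A h) ≤ max (NS h) (NU h) := by
      have h2 : NS (A h) ≤ μ * NS h := hNS_contract h
      have h2' : μ * NS h ≤ NS h := mul_le_of_le_one_left (hNS_nonneg h) hμ1.le
      exact le_trans h2 (le_trans h2' (le_max_left _ _))
    have h4 : NU (A h) ≤ C * ‖A‖ * max (NS h) (NU h) := by
      calc NU (A h) ≤ C * ‖pru (A h)‖ := rawN_le hTucontr (hpru_mem _)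
        _ = C * ‖A (pru h)‖ := by rw [hcomm_u 1 h]
        _ ≤ C * (‖A‖ * ‖pru h‖) := mul_le_mul_of_nonneg_left (A.le_opNorm _) hCpos.le
        _ ≤ C * (‖A‖ * NU h) := by
            have := le_rawN hTu0 hTucontr (hpru_mem h)
            exact mul_le_mul_of_nonneg_left
              (mul_le_mul_of_nonneg_left this (norm_nonneg A)) hCpos.le
        _ ≤ C * ‖A‖ * max (NS h) (NU h) := by
            rw [mul_assoc]
            exact mul_le_mul_of_nonneg_left (mul_le_mul_of_nonneg_left
              (le_max_right _ _) (norm_nonneg A)) hCpos.le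
    exact max_le (le_trans h1 (by linarith)) (le_trans h4 (by linarith))
  have hgrowB : ∀ h : E, max (NS (B h)) (NU (B h)) ≤
      max (NS h) (NU h) + C * ‖B‖ * max (NS h) (NU h) := by
    intro h
    have hmax0 : 0 ≤ max (NS h) (NU h) := le_trans (hNS_nonneg h) (le_max_left _ _)
    have hCB : 0 ≤ C * ‖B‖ * max (NS h) (NU h) :=
      mul_nonneg (mul_nonneg hCpos.le (norm_nonneg _)) hmax0
    have h1 : NU (B h) ≤ max (NS h) (NU h) := by
      have h2 : NU (B h) ≤ μ * NU h := hNU_contract h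
      have h2' : μ * NU h ≤ NU h := mul_le_of_le_one_left (hNU_nonneg h) hμ1.le
      exact le_trans h2 (le_trans h2' (le_max_right _ _))
    have h4 : NS (B h) ≤ C * ‖B‖ * max (NS h) (NU h) := by
      calc NS (B h) ≤ C * ‖prs (B h)‖ := rawN_le hTscontr (hprs_mem _)
        _ = C * ‖B (prs h)‖ := by rw [hcomm_s (-1) h]
        _ ≤ C * (‖B‖ * ‖prs h‖) := mul_le_mul_of_nonneg_left (B.le_opNorm _) hCpos.le
        _ ≤ C * (‖B‖ * NS h) := by
            have := le_rawN hTs0 hTscontr (hprs_mem h)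
            exact mul_le_mul_of_nonneg_left
              (mul_le_mul_of_nonneg_left this (norm_nonneg B)) hCpos.le
        _ ≤ C * ‖B‖ * max (NS h) (NU h) := by
            rw [mul_assoc]
            exact mul_le_mul_of_nonneg_left (mul_le_mul_of_nonneg_left
              (le_max_left _ _) (norm_nonneg B)) hCpos.le
    exact max_le (le_trans h4 (by linarith)) (le_trans h1 (by linarith))
  -- assemble
  refine ⟨{
    σ := σ
    F := P.φ 1
    G := P.φ (-1)
    hFG := fun x => by
      rw [← P.flow_add, show (1:ℝ) + (-1) = 0 by ring, P.flow_zero]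
    hGF := fun x => by
      rw [← P.flow_add, show (-1:ℝ) + 1 = 0 by ring, P.flow_zero]
    contF := P.cont_t 1
    contG := P.cont_t (-1)
    NS := NS
    NU := NU
    NS_nonneg := hNS_nonneg
    NU_nonneg := hNU_nonneg
    NS_add := hNS_add
    NU_add := hNU_add
    NS_neg := hNS_neg
    NU_neg := hNU_neg
    C₂ := C₂
    hC₂ := hC₂
    an_le := han_le
    norm_le := hnorm_le
    μ := μ
    ε := ε
    δ := δ
    M₁ := M₁
    hμ0 := hμ0
    hμ1 := hμ1
    hε := hεpos
    hν1 := hν1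
    hγ1 := hγ1
    hcone := hcone
    hδ := hδpos
    hM₁ := hM₁
    stepF_S := fun h hh => by
      have h1 := hrF h hh
      have h2 : NS (P.φ 1 (σ + h) - σ) ≤ NS (A h) + NS (P.φ 1 (σ + h) - σ - A h) := by
        conv_lhs => rw [hdecF h]
        exact hNS_add _ _
      have h3 := hNS_contract h
      have h4 : NS (P.φ 1 (σ + h) - σ - A h) ≤ ε * max (NS h) (NU h) :=
        le_trans (le_max_left _ _) h1
      calc NS (P.φ 1 (σ + h) - σ) ≤ NS (A h) + NS (P.φ 1 (σ + h) - σ - A h) := h2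
        _ ≤ μ * NS h + ε * max (NS h) (NU h) := add_le_add h3 h4
    stepF_U := fun h hh => by
      have h1 := hrF h hh
      have h4 : NU (P.φ 1 (σ + h) - σ - A h) ≤ ε * max (NS h) (NU h) :=
        le_trans (le_max_right _ _) h1
      have h2 : NU (A h) ≤ NU (P.φ 1 (σ + h) - σ) + NU (P.φ 1 (σ + h) - σ - A h) := by
        have e : A h = (P.φ 1 (σ + h) - σ) + (-(P.φ 1 (σ + h) - σ - A h)) := by abel
        calc NU (A h) = NU ((P.φ 1 (σ + h) - σ) + (-(P.φ 1 (σ + h) - σ - A h))) := by rw [← e]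
          _ ≤ NU (P.φ 1 (σ + h) - σ) + NU (-(P.φ 1 (σ + h) - σ - A h)) := hNU_add _ _
          _ = NU (P.φ 1 (σ + h) - σ) + NU (P.φ 1 (σ + h) - σ - A h) := by rw [hNU_neg]
      have h3 := hNU_expand h
      linarith
    stepG_U := fun h hh => by
      have h1 := hrG h hh
      have h2 : NU (P.φ (-1) (σ + h) - σ) ≤ NU (B h) + NU (P.φ (-1) (σ + h) - σ - B h) := by
        conv_lhs => rw [hdecG h]
        exact hNU_add _ _
      have h3 := hNU_contract h
      have h4 : NU (P.φ (-1) (σ + h) - σ - B h) ≤ ε * max (NS h) (NU h) :=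
        le_trans (le_max_right _ _) h1
      calc NU (P.φ (-1) (σ + h) - σ) ≤ NU (B h) + NU (P.φ (-1) (σ + h) - σ - B h) := h2
        _ ≤ μ * NU h + ε * max (NS h) (NU h) := add_le_add h3 h4
    stepG_S := fun h hh => by
      have h1 := hrG h hh
      have h4 : NS (P.φ (-1) (σ + h) - σ - B h) ≤ ε * max (NS h) (NU h) :=
        le_trans (le_max_left _ _) h1
      have h2 : NS (B h) ≤ NS (P.φ (-1) (σ + h) - σ) + NS (P.φ (-1) (σ + h) - σ - B h) := by
        have e : B h = (P.φ (-1) (σ + h) - σ) + (-(P.φ (-1) (σ + h) - σ - B h)) := by abel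
        calc NS (B h) = NS ((P.φ (-1) (σ + h) - σ) + (-(P.φ (-1) (σ + h) - σ - B h))) := by
              rw [← e]
          _ ≤ NS (P.φ (-1) (σ + h) - σ) + NS (-(P.φ (-1) (σ + h) - σ - B h)) := hNS_add _ _
          _ = NS (P.φ (-1) (σ + h) - σ) + NS (P.φ (-1) (σ + h) - σ - B h) := by rw [hNS_neg]
      have h3 := hNS_expand h
      linarith
    growF := fun h hh => by
      have h1 := hrF h hh
      have hmax0 : 0 ≤ max (NS h) (NU h) := le_trans (hNS_nonneg h) (le_max_left _ _)
      have h2 : max (NS (P.φ 1 (σ + h) - σ)) (NU (P.φ 1 (σ + h) - σ)) ≤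
          max (NS (A h)) (NU (A h)) +
          max (NS (P.φ 1 (σ + h) - σ - A h)) (NU (P.φ 1 (σ + h) - σ - A h)) := by
        apply max_le
        · have := hNS_add (A h) (P.φ 1 (σ + h) - σ - A h)
          rw [← hdecF h] at this
          exact le_trans this (add_le_add (le_max_left _ _) (le_max_left _ _))
        · have := hNU_add (A h) (P.φ 1 (σ + h) - σ - A h)
          rw [← hdecF h] at this
          exact le_trans this (add_le_add (le_max_right _ _) (le_max_right _ _))
      have h3 := hgrowA h
      have hsc : (1 + C * ‖A‖) + ε ≤ M₁ := by
        rw [hM₁def]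
        have := mul_nonneg hCpos.le (norm_nonneg B)
        nlinarith
      have h5 := mul_le_mul_of_nonneg_right hsc hmax0
      calc max (NS (P.φ 1 (σ + h) - σ)) (NU (P.φ 1 (σ + h) - σ))
          ≤ (max (NS h) (NU h) + C * ‖A‖ * max (NS h) (NU h)) +
            ε * max (NS h) (NU h) := by linarith
        _ = ((1 + C * ‖A‖) + ε) * max (NS h) (NU h) := by ring
        _ ≤ M₁ * max (NS h) (NU h) := h5
    growG := fun h hh => by
      have h1 := hrG h hh
      have hmax0 : 0 ≤ max (NS h) (NU h) := le_trans (hNS_nonneg h) (le_max_left _ _)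
      have h2 : max (NS (P.φ (-1) (σ + h) - σ)) (NU (P.φ (-1) (σ + h) - σ)) ≤
          max (NS (B h)) (NU (B h)) +
          max (NS (P.φ (-1) (σ + h) - σ - B h)) (NU (P.φ (-1) (σ + h) - σ - B h)) := by
        apply max_le
        · have := hNS_add (B h) (P.φ (-1) (σ + h) - σ - B h)
          rw [← hdecG h] at this
          exact le_trans this (add_le_add (le_max_left _ _) (le_max_left _ _))
        · have := hNU_add (B h) (P.φ (-1) (σ + h) - σ - B h)
          rw [← hdecG h] at this
          exact le_trans this (add_le_add (le_max_right _ _) (le_max_right _ _))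
      have h3 := hgrowB h
      have hsc : (1 + C * ‖B‖) + ε ≤ M₁ := by
        rw [hM₁def]
        have := mul_nonneg hCpos.le (norm_nonneg A)
        nlinarith
      have h5 := mul_le_mul_of_nonneg_right hsc hmax0
      calc max (NS (P.φ (-1) (σ + h) - σ)) (NU (P.φ (-1) (σ + h) - σ))
          ≤ (max (NS h) (NU h) + C * ‖B‖ * max (NS h) (NU h)) +
            ε * max (NS h) (NU h) := by linarith
        _ = ((1 + C * ‖B‖) + ε) * max (NS h) (NU h) := by ring
        _ ≤ M₁ * max (NS h) (NU h) := h5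
  }, rfl, rfl, rfl⟩

end FlowPkg


namespace FlowPkg

variable {E : Type*} [NormedAddCommGroup E] [InnerProductSpace ℝ E] [FiniteDimensional ℝ E]
variable (P : FlowPkg E)

lemma iter_phi_one (n : ℕ) (x : E) : (P.φ 1)^[n] x = P.φ (n:ℝ) x := by
  induction n with
  | zero => simp [P.flow_zero]
  | succ n ih =>
    rw [Function.iterate_succ_apply', ih, ← P.flow_add]
    push_cast; ring_nf
lemma iter_phi_negone (n : ℕ) (x : E) : (P.φ (-1))^[n] x = P.φ (-(n:ℝ)) x := by
  induction n with
  | zero => simp [P.flow_zero]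
  | succ n ih =>
    rw [Function.iterate_succ_apply', ih, ← P.flow_add]
    push_cast; ring_nf

lemma uc_on_compact (Λ : Set E) (hΛc : IsCompact Λ) :
    ∀ η > (0:ℝ), ∃ ρ > (0:ℝ), ∀ u ∈ Set.Icc (0:ℝ) 1, ∀ a ∈ Λ, ∀ b ∈ Λ,
      dist a b ≤ ρ → dist (P.φ u a) (P.φ u b) ≤ η := by
  intro η hη
  have hK : IsCompact ((Set.Icc (0:ℝ) 1) ×ˢ Λ) := isCompact_Icc.prod hΛc
  have huc := hK.uniformContinuousOn_of_continuous P.contφ.continuousOn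
  rw [Metric.uniformContinuousOn_iff_le] at huc
  obtain ⟨ρ, hρ, h⟩ := huc η hη
  refine ⟨ρ, hρ, fun u hu a ha b hb hab => ?_⟩
  have h1 : ((u, a) : ℝ × E) ∈ (Set.Icc (0:ℝ) 1) ×ˢ Λ := ⟨hu, ha⟩
  have h2 : ((u, b) : ℝ × E) ∈ (Set.Icc (0:ℝ) 1) ×ˢ Λ := ⟨hu, hb⟩
  have h3 : dist ((u, a) : ℝ × E) ((u, b) : ℝ × E) ≤ ρ := by
    rw [Prod.dist_eq]
    simp only [dist_self]
    rw [max_eq_right dist_nonneg]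
    exact hab
  exact h _ h1 _ h2 h3

lemma uc_near_sigma {σ : E} (hfix : ∀ t, P.φ t σ = σ) :
    ∀ η > (0:ℝ), ∃ ρ > (0:ℝ), ∀ u ∈ Set.Icc (-1:ℝ) 1, ∀ w : E,
      dist w σ ≤ ρ → dist (P.φ u w) σ ≤ η := by
  intro η hη
  have hK : IsCompact ((Set.Icc (-1:ℝ) 1) ×ˢ Metric.closedBall σ 1) :=
    isCompact_Icc.prod (isCompact_closedBall σ 1)
  have huc := hK.uniformContinuousOn_of_continuous P.contφ.continuousOn
  rw [Metric.uniformContinuousOn_iff_le] at huc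
  obtain ⟨ρ, hρ, h⟩ := huc η hη
  refine ⟨min ρ 1, lt_min hρ one_pos, fun u hu w hw => ?_⟩
  have h1 : ((u, w) : ℝ × E) ∈ (Set.Icc (-1:ℝ) 1) ×ˢ Metric.closedBall σ 1 :=
    ⟨hu, by simpa [Metric.mem_closedBall] using le_trans hw (min_le_right _ _)⟩
  have h2 : ((u, σ) : ℝ × E) ∈ (Set.Icc (-1:ℝ) 1) ×ˢ Metric.closedBall σ 1 :=
    ⟨hu, by simp [Metric.mem_closedBall]⟩
  have h3 : dist ((u, w) : ℝ × E) ((u, σ) : ℝ × E) ≤ ρ := by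
    rw [Prod.dist_eq]
    simp only [dist_self]
    rw [max_eq_right dist_nonneg]
    exact le_trans hw (min_le_left _ _)
  have h4 := h _ h1 _ h2 h3
  simpa [hfix u] using h4

lemma mem_Ws_of_nat_tendsto {σ : E} (hfix : ∀ t, P.φ t σ = σ) (z : E)
    (h : Filter.Tendsto (fun n : ℕ => P.φ (n:ℝ) z) Filter.atTop (nhds σ)) :
    z ∈ P.Ws σ := by
  rw [Ws, Set.mem_setOf_eq, Metric.tendsto_atTop]
  intro ηε hε
  obtain ⟨ρ, hρ, huc⟩ := P.uc_near_sigma hfix (ηε/2) (by linarith)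
  rw [Metric.tendsto_atTop] at h
  obtain ⟨N, hN⟩ := h ρ hρ
  refine ⟨(N:ℝ) + 1, fun t ht => ?_⟩
  have h0 : (0:ℝ) ≤ t := le_trans (by positivity) ht
  set n : ℕ := ⌊t⌋₊ with hn
  have hn1 : (n:ℝ) ≤ t := Nat.floor_le h0
  have hn2 : t < n + 1 := Nat.lt_floor_add_one t
  have hnN : N ≤ n := by
    have : (N:ℝ) ≤ (n:ℝ) := by linarith
    exact_mod_cast this
  have e1 : P.φ t z = P.φ (t - n) (P.φ (n:ℝ) z) := by
    rw [← P.flow_add]; ring_nf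
  have h2 := hN n hnN
  have h3 : (t - n) ∈ Set.Icc (-1:ℝ) 1 := ⟨by linarith, by linarith⟩
  have h4 := huc (t - n) h3 (P.φ (n:ℝ) z) h2.le
  rw [e1]
  linarith
lemma mem_Wu_of_nat_tendsto {σ : E} (hfix : ∀ t, P.φ t σ = σ) (z : E)
    (h : Filter.Tendsto (fun n : ℕ => P.φ (-(n:ℝ)) z) Filter.atTop (nhds σ)) :
    z ∈ P.Wu σ := by
  rw [Wu, Set.mem_setOf_eq]
  have hmain : Filter.Tendsto (fun s : ℝ => P.φ (-s) z) Filter.atTop (nhds σ) := by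
    rw [Metric.tendsto_atTop]
    intro ηε hε
    obtain ⟨ρ, hρ, huc⟩ := P.uc_near_sigma hfix (ηε/2) (by linarith)
    rw [Metric.tendsto_atTop] at h
    obtain ⟨N, hN⟩ := h ρ hρ
    refine ⟨(N:ℝ) + 1, fun t ht => ?_⟩
    have h0 : (0:ℝ) ≤ t := le_trans (by positivity) ht
    set n : ℕ := ⌊t⌋₊ with hn
    have hn1 : (n:ℝ) ≤ t := Nat.floor_le h0
    have hn2 : t < n + 1 := Nat.lt_floor_add_one t
    have hnN : N ≤ n := by
      have : (N:ℝ) ≤ (n:ℝ) := by linarith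
      exact_mod_cast this
    have e1 : P.φ (-t) z = P.φ (-(t - n)) (P.φ (-(n:ℝ)) z) := by
      rw [← P.flow_add]; ring_nf
    have h2 := hN n hnN
    have h3 : (-(t - n)) ∈ Set.Icc (-1:ℝ) 1 := ⟨by linarith, by linarith⟩
    have h4 := huc (-(t - n)) h3 (P.φ (-(n:ℝ)) z) h2.le
    rw [e1]
    linarith
  have he : (fun t : ℝ => P.φ t z) = (fun s : ℝ => P.φ (-s) z) ∘ (fun t : ℝ => -t) := by
    funext t; simp
  rw [he]
  exact hmain.comp Filter.tendsto_neg_atBot_atTop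

lemma Ws_shift {σ : E} (q : E) (h : P.φ 1 q ∈ P.Ws σ) : q ∈ P.Ws σ := by
  rw [Ws, Set.mem_setOf_eq]
  have he : (fun t : ℝ => P.φ t q) =
      (fun s : ℝ => P.φ s (P.φ 1 q)) ∘ (fun t : ℝ => t + (-1)) := by
    funext t
    simp only [Function.comp_apply]
    rw [← P.flow_add]
    ring_nf
  rw [he]
  exact h.comp (Filter.tendsto_atTop_add_const_right Filter.atTop (-1) Filter.tendsto_id)
lemma Wu_shift {σ : E} (q : E) (h : P.φ (-1) q ∈ P.Wu σ) : q ∈ P.Wu σ := by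
  rw [Wu, Set.mem_setOf_eq]
  have he : (fun t : ℝ => P.φ t q) =
      (fun s : ℝ => P.φ s (P.φ (-1) q)) ∘ (fun t : ℝ => t + 1) := by
    funext t
    simp only [Function.comp_apply]
    rw [← P.flow_add]
    ring_nf
  rw [he]
  exact h.comp (Filter.tendsto_atBot_add_const_right Filter.atBot 1 Filter.tendsto_id)

/-- converting real-time pseudo-orbits into integer-time ones -/
lemma int_chain (Λ : Set E) (hΛc : IsCompact Λ) (hinv : P.Invariant Λ)
    (hct : P.ChainTransitive Λ) (a b : E) (ha : a ∈ Λ) (hb : b ∈ Λ)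
    (η : ℝ) (hη : 0 < η) :
    ∃ (n : ℕ) (y : ℕ → E) (m : ℕ → ℕ), (∀ i < n, 1 ≤ m i) ∧ (∀ i ≤ n, y i ∈ Λ) ∧
      (∀ i < n, dist ((P.φ 1)^[m i] (y i)) (y (i+1)) ≤ η) ∧ y 0 = a ∧
      ∃ u ∈ Set.Ico (0:ℝ) 1, y n = P.φ u b := by
  obtain ⟨ρ, hρ, huc⟩ := P.uc_on_compact Λ hΛc η hη
  obtain ⟨n, x, T, hn, ⟨hT1, hjump⟩, hxΛ, hx0, hxn⟩ := hct a ha b hb (min ρ η) (lt_min hρ hη)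
  set s : ℕ → ℝ := fun i => ∑ j ∈ Finset.range i, T j with hs
  have hs0 : s 0 = 0 := by simp [hs]
  have hssucc : ∀ i, s (i+1) = s i + T i := by
    intro i; rw [hs]; exact Finset.sum_range_succ T i
  set u : ℕ → ℝ := fun i => (⌈s i⌉ : ℝ) - s i with hu
  have hu0 : ∀ i, 0 ≤ u i := fun i => by
    rw [hu]; simp only []; linarith [Int.le_ceil (s i)]
  have hu1 : ∀ i, u i < 1 := fun i => by
    rw [hu]; simp only []; linarith [Int.ceil_lt_add_one (s i)]
  set y : ℕ → E := fun i => P.φ (u i) (x i) with hy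
  set m : ℕ → ℕ := fun i => (⌈s (i+1)⌉ - ⌈s i⌉).toNat with hm
  have hmpos : ∀ i < n, 1 ≤ m i := by
    intro i hi
    have h1 : s i + 1 ≤ s (i+1) := by rw [hssucc]; linarith [hT1 i hi]
    have h2 : ⌈s i⌉ + 1 = ⌈s i + 1⌉ := (Int.ceil_add_one (s i)).symm
    have h3 : ⌈s i + 1⌉ ≤ ⌈s (i+1)⌉ := Int.ceil_le_ceil h1
    show 1 ≤ (⌈s (i+1)⌉ - ⌈s i⌉).toNat
    omega
  have hmcast : ∀ i < n, (m i : ℝ) = (⌈s (i+1)⌉ : ℝ) - (⌈s i⌉ : ℝ) := by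
    intro i hi
    have h1 : s i + 1 ≤ s (i+1) := by rw [hssucc]; linarith [hT1 i hi]
    have h3 : ⌈s i⌉ ≤ ⌈s (i+1)⌉ := Int.ceil_le_ceil (by linarith)
    show (((⌈s (i+1)⌉ - ⌈s i⌉).toNat : ℕ) : ℝ) = _
    have hnn : (0:ℤ) ≤ ⌈s (i+1)⌉ - ⌈s i⌉ := by omega
    rw [← Int.cast_natCast (R := ℝ), Int.toNat_of_nonneg hnn]
    push_cast
    ring
  have hyΛ : ∀ i ≤ n, y i ∈ Λ := fun i hi => hinv (u i) (x i) (hxΛ i hi)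
  refine ⟨n, y, m, hmpos, hyΛ, ?_, ?_, ?_⟩
  · intro i hi
    have e1 : (P.φ 1)^[m i] (y i) = P.φ (u (i+1)) (P.φ (T i) (x i)) := by
      rw [P.iter_phi_one, hy]
      simp only []
      rw [← P.flow_add, ← P.flow_add, hmcast i hi]
      congr 1
      rw [hu]
      simp only []
      rw [hssucc]
      ring
    have e2 : y (i+1) = P.φ (u (i+1)) (x (i+1)) := rfl
    rw [e1, e2]
    have hφT : P.φ (T i) (x i) ∈ Λ := hinv (T i) (x i) (hxΛ i (by omega))
    have hj := hjump i hi
    exact huc (u (i+1)) ⟨hu0 (i+1), (hu1 (i+1)).le⟩ _ hφT _ (hxΛ (i+1) (by omega))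
      (le_trans hj.le (min_le_left _ _))
  · show P.φ (u 0) (x 0) = a
    have : u 0 = 0 := by
      show (⌈s 0⌉ : ℝ) - s 0 = 0
      rw [hs0]; simp
    rw [this, P.flow_zero, hx0]
  · refine ⟨u n, ⟨hu0 n, hu1 n⟩, ?_⟩
    show P.φ (u n) (x n) = P.φ (u n) b
    rw [hxn]

end FlowPkg


namespace FlowPkg

variable {E : Type*} [NormedAddCommGroup E] [InnerProductSpace ℝ E] [FiniteDimensional ℝ E]
variable (P : FlowPkg E)

lemma nat_tendsto_of_stay (D : DHyp E) (hDF : D.F = P.φ 1) {σ : E} (hDσ : D.σ = σ)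
    (z : E) (hstay : ∀ n : ℕ, D.an (D.F^[n] z - σ) ≤ D.δ) :
    Filter.Tendsto (fun n : ℕ => P.φ (n:ℝ) z) Filter.atTop (nhds σ) := by
  have hc := D.stay_contract z (by rw [hDσ]; exact hstay)
  rw [hDσ] at hc
  have hν0 : 0 ≤ D.μ + D.ε := by linarith [D.hμ0.le, D.hε.le]
  have hν1 : D.μ + D.ε < 1 := D.hν1
  rw [tendsto_iff_dist_tendsto_zero]
  apply squeeze_zero (fun n => dist_nonneg)
    (g := fun n : ℕ => (2 * D.an (z - σ)) * (D.μ + D.ε)^n)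
  · intro n
    have h1 : dist (P.φ (n:ℝ) z) σ = ‖P.φ (n:ℝ) z - σ‖ := dist_eq_norm _ _
    have h2 : ‖P.φ (n:ℝ) z - σ‖ ≤ 2 * D.an (P.φ (n:ℝ) z - σ) := D.norm_le_two_an _
    have h3 : D.F^[n] z = P.φ (n:ℝ) z := by rw [hDF, P.iter_phi_one]
    have h4 := hc n
    rw [h3] at h4
    rw [h1]
    calc ‖P.φ (n:ℝ) z - σ‖ ≤ 2 * D.an (P.φ (n:ℝ) z - σ) := h2
      _ ≤ 2 * ((D.μ + D.ε)^n * D.an (z - σ)) := by linarith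
      _ = (2 * D.an (z - σ)) * (D.μ + D.ε)^n := by ring
  · have := (tendsto_pow_atTop_nhds_zero_of_lt_one hν0 hν1).const_mul (2 * D.an (z - σ))
    simpa using this

lemma nat_tendsto_of_stay_back (D : DHyp E) (hDG : D.G = P.φ (-1)) {σ : E} (hDσ : D.σ = σ)
    (z : E) (hstay : ∀ n : ℕ, D.an (D.G^[n] z - σ) ≤ D.δ) :
    Filter.Tendsto (fun n : ℕ => P.φ (-(n:ℝ)) z) Filter.atTop (nhds σ) := by
  have hc := D.symm.stay_contract z (by
    intro n
    rw [D.an_symm]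
    show D.an (D.G^[n] z - D.σ) ≤ D.δ
    rw [hDσ]; exact hstay n)
  have hν0 : 0 ≤ D.μ + D.ε := by linarith [D.hμ0.le, D.hε.le]
  have hν1 : D.μ + D.ε < 1 := D.hν1
  rw [tendsto_iff_dist_tendsto_zero]
  apply squeeze_zero (fun n => dist_nonneg)
    (g := fun n : ℕ => (2 * D.an (z - σ)) * (D.μ + D.ε)^n)
  · intro n
    have h4 := hc n
    rw [D.an_symm, D.an_symm] at h4
    have h3 : D.symm.F^[n] z = P.φ (-(n:ℝ)) z := by
      show D.G^[n] z = P.φ (-(n:ℝ)) z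
      rw [hDG, P.iter_phi_negone]
    have e0 : D.symm.σ = σ := by show D.σ = σ; exact hDσ
    rw [h3, e0] at h4
    have h2 : ‖P.φ (-(n:ℝ)) z - σ‖ ≤ 2 * D.an (P.φ (-(n:ℝ)) z - σ) := D.norm_le_two_an _
    rw [dist_eq_norm]
    calc ‖P.φ (-(n:ℝ)) z - σ‖ ≤ 2 * D.an (P.φ (-(n:ℝ)) z - σ) := h2
      _ ≤ 2 * ((D.μ + D.ε)^n * D.an (z - σ)) := by
          have : D.symm.μ + D.symm.ε = D.μ + D.ε := rfl
          rw [this] at h4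
          linarith
      _ = (2 * D.an (z - σ)) * (D.μ + D.ε)^n := by ring
  · have := (tendsto_pow_atTop_nhds_zero_of_lt_one hν0 hν1).const_mul (2 * D.an (z - σ))
    simpa using this

lemma ws_half (Λ : Set E) (hΛc : IsCompact Λ) (hinv : P.Invariant Λ)
    (hct : P.ChainTransitive Λ) (hnt : P.NontrivialSet Λ)
    (σ : E) (hσ : σ ∈ Λ) (hs : HypSing P σ) :
    ((P.Ws σ \ {σ}) ∩ Λ).Nonempty := by
  classical
  obtain ⟨D, hDF, hDG, hDσ⟩ := P.exists_DHyp hs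
  have hfix : ∀ t, P.φ t σ = σ := P.fixed hs.zero
  have hFΛ : Set.MapsTo D.F Λ Λ := by rw [hDF]; exact fun x hx => hinv 1 x hx
  have hGΛ : Set.MapsTo D.G Λ Λ := by rw [hDG]; exact fun x hx => hinv (-1) x hx
  -- a point different from σ
  obtain ⟨y, hyΛ, hyne⟩ : ∃ y ∈ Λ, y ≠ σ := by
    by_contra hc
    push_neg at hc
    refine hnt ⟨σ, Set.eq_of_subset_of_subset (fun w hw => ?_) (fun w hw => ?_)⟩
    · exact ⟨0, by show P.φ 0 σ = w; rw [P.flow_zero]; exact (hc w hw).symm⟩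
    · obtain ⟨t, rfl⟩ := hw
      show P.φ t σ ∈ Λ
      rw [hfix t]
      exact hσ
  by_cases hI : ∃ z ∈ Λ, z ≠ σ ∧ ∀ n : ℕ, D.an (D.F^[n] z - σ) ≤ D.δ
  · obtain ⟨z, hzΛ, hzne, hstay⟩ := hI
    have hten := P.nat_tendsto_of_stay D hDF hDσ z hstay
    exact ⟨z, ⟨⟨P.mem_Ws_of_nat_tendsto hfix z hten, by simp [hzne]⟩, hzΛ⟩⟩
  by_cases hIII : ∃ j : ℕ, ∀ z ∈ Λ, D.an (z - σ) ≤ min D.δ (1/(j+1)) →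
      ∀ k : ℕ, D.an (D.G^[k] z - σ) ≤ D.δ
  · -- trapping case : contradiction with chain transitivity
    exfalso
    obtain ⟨j, htrap⟩ := hIII
    have hρ'pos : (0:ℝ) < min D.δ (1/(j+1)) := lt_min D.hδ (by positivity)
    have hν0 : 0 ≤ D.μ + D.ε := by linarith [D.hμ0.le, D.hε.le]
    have hν1 : D.μ + D.ε < 1 := D.hν1
    have hanpos : 0 < D.an (y - σ) := D.an_pos_of_ne (sub_ne_zero.mpr hyne)
    set c := min (min D.δ (1/(j+1)) / 2) (D.an (y - σ) / 2) with hcdef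
    have hcpos : 0 < c := lt_min (by linarith) (by linarith)
    have hC₂pos : (0:ℝ) < D.C₂ := lt_of_lt_of_le one_pos D.hC₂
    obtain ⟨n, y', m, hm1, hy'Λ, hjd, hy'0, u, hu, hy'n⟩ :=
      P.int_chain Λ hΛc hinv hct y σ hyΛ hσ (c * (1 - (D.μ + D.ε)) / D.C₂)
        (by have : 0 < 1 - (D.μ + D.ε) := by linarith
            positivity)
    have hend : D.an (y' n - σ) ≤ c := by
      rw [hy'n, hfix u, sub_self]
      have h1 : D.an 0 ≤ D.C₂ * ‖(0:E)‖ := D.an_le_C₂ _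
      rw [norm_zero, mul_zero] at h1
      linarith
    have hjumps : ∀ i < n, D.an (D.F^[m i] (y' i) - y' (i+1)) ≤ c * (1 - (D.μ + D.ε)) := by
      intro i hi
      have h1 := hjd i hi
      have h2 : D.an (D.F^[m i] (y' i) - y' (i+1)) ≤
          D.C₂ * ‖D.F^[m i] (y' i) - y' (i+1)‖ := D.an_le_C₂ _
      rw [hDF] at h2 ⊢
      rw [← dist_eq_norm] at h2
      calc D.an ((P.φ 1)^[m i] (y' i) - y' (i+1)) ≤
            D.C₂ * dist ((P.φ 1)^[m i] (y' i)) (y' (i+1)) := h2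
        _ ≤ D.C₂ * (c * (1 - (D.μ + D.ε)) / D.C₂) :=
            mul_le_mul_of_nonneg_left h1 hC₂pos.le
        _ = c * (1 - (D.μ + D.ε)) := by field_simp
    have hdown := D.chain_down Λ (min D.δ (1/(j+1))) c hcpos
      (min_le_left _ _)
      (by
        have h1 : c ≤ min D.δ (1/(j+1)) / 2 := min_le_left _ _
        nlinarith)
      (by simp only [hDσ]; exact htrap)
      hFΛ n y' m hm1 hy'Λ hjumps (by simp only [hDσ]; exact hend)
    rw [hDσ, hy'0] at hdown
    have h2 : c ≤ D.an (y - σ) / 2 := min_le_right _ _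
    linarith
  · -- escape case : construct a forward stayer by compactness
    push_neg at hIII
    have hseq : ∀ j : ℕ, ∃ z ∈ Λ, D.an (z - D.σ) ≤ min D.δ (1/(j+1)) ∧
        ∃ k : ℕ, D.δ < D.an (D.G^[k] z - D.σ) := by
      intro j
      obtain ⟨z, hzΛ, hz1, k, hk⟩ := hIII j
      exact ⟨z, hzΛ, by rw [hDσ]; exact hz1, k, by rw [hDσ]; exact hk⟩
    obtain ⟨q, hqΛ, hqδ, hqstay⟩ := D.exists_forward_stayer Λ hΛc hGΛ hseq
    rw [hDσ] at hqδ
    have hqne : q ≠ σ := by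
      intro hq
      rw [hq, sub_self] at hqδ
      have h1 : D.an 0 ≤ D.C₂ * ‖(0:E)‖ := D.an_le_C₂ _
      simp only [norm_zero, mul_zero] at h1
      linarith [D.hδ]
    -- F q is a forward stayer
    have hstay1 : ∀ n : ℕ, D.an (D.F^[n] (D.F q) - σ) ≤ D.δ := by
      intro n
      have h1 : D.F^[n] (D.F q) = D.F^[n+1] q := by
        rw [← Function.iterate_succ_apply]
      rw [h1]
      have := hqstay (n+1) (by omega)
      rw [hDσ] at this
      exact this
    have hten := P.nat_tendsto_of_stay D hDF hDσ (D.F q) hstay1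
    have hWs1 : D.F q ∈ P.Ws σ := P.mem_Ws_of_nat_tendsto hfix (D.F q) hten
    rw [hDF] at hWs1
    have hWs : q ∈ P.Ws σ := P.Ws_shift q hWs1
    exact ⟨q, ⟨⟨hWs, by simp [hqne]⟩, hqΛ⟩⟩

end FlowPkg


namespace FlowPkg

variable {E : Type*} [NormedAddCommGroup E] [InnerProductSpace ℝ E] [FiniteDimensional ℝ E]
variable (P : FlowPkg E)

lemma wu_half (Λ : Set E) (hΛc : IsCompact Λ) (hinv : P.Invariant Λ)
    (hct : P.ChainTransitive Λ) (hnt : P.NontrivialSet Λ)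
    (σ : E) (hσ : σ ∈ Λ) (hs : HypSing P σ) :
    ((P.Wu σ \ {σ}) ∩ Λ).Nonempty := by
  classical
  obtain ⟨D, hDF, hDG, hDσ⟩ := P.exists_DHyp hs
  have hfix : ∀ t, P.φ t σ = σ := P.fixed hs.zero
  have hFΛ : Set.MapsTo D.F Λ Λ := by rw [hDF]; exact fun x hx => hinv 1 x hx
  have hGΛ : Set.MapsTo D.G Λ Λ := by rw [hDG]; exact fun x hx => hinv (-1) x hx
  obtain ⟨y, hyΛ, hyne⟩ : ∃ y ∈ Λ, y ≠ σ := by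
    by_contra hc
    push_neg at hc
    refine hnt ⟨σ, Set.eq_of_subset_of_subset (fun w hw => ?_) (fun w hw => ?_)⟩
    · exact ⟨0, by show P.φ 0 σ = w; rw [P.flow_zero]; exact (hc w hw).symm⟩
    · obtain ⟨t, rfl⟩ := hw
      show P.φ t σ ∈ Λ
      rw [hfix t]
      exact hσ
  by_cases hI : ∃ z ∈ Λ, z ≠ σ ∧ ∀ n : ℕ, D.an (D.G^[n] z - σ) ≤ D.δ
  · obtain ⟨z, hzΛ, hzne, hstay⟩ := hI
    have hten := P.nat_tendsto_of_stay_back D hDG hDσ z hstay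
    exact ⟨z, ⟨⟨P.mem_Wu_of_nat_tendsto hfix z hten, by simp [hzne]⟩, hzΛ⟩⟩
  by_cases hIII : ∃ j : ℕ, ∀ z ∈ Λ, D.an (z - σ) ≤ min D.δ (1/(j+1)) →
      ∀ k : ℕ, D.an (D.F^[k] z - σ) ≤ D.δ
  · -- forward trapping case : contradiction with chain transitivity
    exfalso
    obtain ⟨j, htrap⟩ := hIII
    have hρ'pos : (0:ℝ) < min D.δ (1/(j+1)) := lt_min D.hδ (by positivity)
    have hν0 : 0 ≤ D.μ + D.ε := by linarith [D.hμ0.le, D.hε.le]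
    have hν1 : D.μ + D.ε < 1 := D.hν1
    have hC₂pos : (0:ℝ) < D.C₂ := lt_of_lt_of_le one_pos D.hC₂
    -- minimum of the adapted distance along the unit orbit segment of y
    have hg : Continuous fun u : ℝ => D.an (P.φ u y - σ) := by
      apply D.an_continuous.comp
      exact (P.contφ.comp (continuous_id.prodMk continuous_const)).sub continuous_const
    obtain ⟨u₀, hu₀, hmin⟩ := isCompact_Icc.exists_isMinOn
      (Set.nonempty_Icc.mpr (zero_le_one)) hg.continuousOn
    set c₀ := D.an (P.φ u₀ y - σ) with hc₀def
    have hc₀pos : 0 < c₀ := by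
      apply D.an_pos_of_ne
      rw [sub_ne_zero]
      intro hq
      exact hyne (P.phi_injective u₀ (by rw [hq, hfix u₀]))
    set c := min (min D.δ (1/(j+1))) (c₀/2) with hcdef
    have hcpos : 0 < c := lt_min hρ'pos (by linarith)
    obtain ⟨n, y', m, hm1, hy'Λ, hjd, hy'0, u, hu, hy'n⟩ :=
      P.int_chain Λ hΛc hinv hct σ y hσ hyΛ (c * (1 - (D.μ + D.ε)) / D.C₂)
        (by have : 0 < 1 - (D.μ + D.ε) := by linarith
            positivity)
    have hstart : D.an (y' 0 - σ) ≤ c := by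
      rw [hy'0, sub_self]
      have h1 : D.an 0 ≤ D.C₂ * ‖(0:E)‖ := D.an_le_C₂ _
      rw [norm_zero, mul_zero] at h1
      linarith
    have hjumps : ∀ i < n, D.an (D.F^[m i] (y' i) - y' (i+1)) ≤ c * (1 - (D.μ + D.ε)) := by
      intro i hi
      have h1 := hjd i hi
      have h2 : D.an (D.F^[m i] (y' i) - y' (i+1)) ≤
          D.C₂ * ‖D.F^[m i] (y' i) - y' (i+1)‖ := D.an_le_C₂ _
      rw [hDF] at h2 ⊢
      rw [← dist_eq_norm] at h2
      calc D.an ((P.φ 1)^[m i] (y' i) - y' (i+1)) ≤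
            D.C₂ * dist ((P.φ 1)^[m i] (y' i)) (y' (i+1)) := h2
        _ ≤ D.C₂ * (c * (1 - (D.μ + D.ε)) / D.C₂) :=
            mul_le_mul_of_nonneg_left h1 hC₂pos.le
        _ = c * (1 - (D.μ + D.ε)) := by field_simp
    have hup := D.chain_up Λ (min D.δ (1/(j+1))) c hcpos
      (min_le_left _ _) (min_le_left _ _)
      (by simp only [hDσ]; exact htrap)
      n y' m hm1 hy'Λ hjumps (by simp only [hDσ]; exact hstart)
    have hlast := hup n (le_refl n)
    rw [hDσ, hy'n] at hlast
    have h3 : c₀ ≤ D.an (P.φ u y - σ) := hmin ⟨hu.1, hu.2.le⟩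
    have h4 : c ≤ c₀/2 := min_le_right _ _
    linarith
  · -- escape case : construct a backward stayer by compactness
    push_neg at hIII
    have hseq : ∀ j : ℕ, ∃ z ∈ Λ, D.symm.an (z - D.symm.σ) ≤ min D.symm.δ (1/(j+1)) ∧
        ∃ k : ℕ, D.symm.δ < D.symm.an (D.symm.G^[k] z - D.symm.σ) := by
      intro j
      obtain ⟨z, hzΛ, hz1, k, hk⟩ := hIII j
      refine ⟨z, hzΛ, ?_, k, ?_⟩
      · rw [D.an_symm]
        show D.an (z - D.σ) ≤ min D.δ (1/(j+1))
        rw [hDσ]; exact hz1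
      · rw [D.an_symm]
        show D.δ < D.an (D.F^[k] z - D.σ)
        rw [hDσ]; exact hk
    obtain ⟨q, hqΛ, hqδ, hqstay⟩ := D.symm.exists_forward_stayer Λ hΛc hFΛ hseq
    rw [D.an_symm] at hqδ
    have hqδ' : D.δ ≤ D.an (q - σ) := by
      rw [← hDσ]; exact hqδ
    have hqne : q ≠ σ := by
      intro hq
      rw [hq, sub_self] at hqδ'
      have h1 : D.an 0 ≤ D.C₂ * ‖(0:E)‖ := D.an_le_C₂ _
      rw [norm_zero, mul_zero] at h1
      linarith [D.hδ]
    have hstay1 : ∀ n : ℕ, D.an (D.G^[n] (D.G q) - σ) ≤ D.δ := by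
      intro n
      have h1 : D.G^[n] (D.G q) = D.G^[n+1] q := by
        rw [← Function.iterate_succ_apply]
      rw [h1]
      have h2 := hqstay (n+1) (by omega)
      rw [D.an_symm] at h2
      have h3 : D.symm.F^[n+1] q = D.G^[n+1] q := rfl
      rw [h3] at h2
      rw [← hDσ]
      exact h2
    have hten := P.nat_tendsto_of_stay_back D hDG hDσ (D.G q) hstay1
    have hWu1 : D.G q ∈ P.Wu σ := P.mem_Wu_of_nat_tendsto hfix (D.G q) hten
    rw [hDG] at hWu1
    have hWu : q ∈ P.Wu σ := P.Wu_shift q hWu1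
    exact ⟨q, ⟨⟨hWu, by simp [hqne]⟩, hqΛ⟩⟩

end FlowPkg


end Auxiliary

/-- a nontrivial chain transitive compact invariant set containing a
hyperbolic singularity `σ` meets both `W^s(σ)∖{σ}` and `W^u(σ)∖{σ}`. -/
theorem stmt0 {E : Type*} [NormedAddCommGroup E] [InnerProductSpace ℝ E]
    [FiniteDimensional ℝ E] (P : FlowPkg E) (Λ : Set E)
    (hΛc : IsCompact Λ) (hinv : P.Invariant Λ)
    (hct : P.ChainTransitive Λ) (hnt : P.NontrivialSet Λ)
    (σ : E) (hσ : σ ∈ Λ) (hs : HypSing P σ) :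
    ((P.Ws σ \ {σ}) ∩ Λ).Nonempty ∧ ((P.Wu σ \ {σ}) ∩ Λ).Nonempty := by
  exact ⟨P.ws_half Λ hΛc hinv hct hnt σ hσ hs, P.wu_half Λ hΛc hinv hct hnt σ hσ hs⟩
end

section
/- Let Λ be a positively singular hyperbolic compact invariant set with splitting E^{ss} ⊕ E^{cu}, and suppose dim E^u_σ ≥ dim T_σM − dim E^{ss} − 2 fails in the sense that Ind(σ) ≥ dim E^{ss} + 2 for some singularity σ ∈ Λ. Then one obtains two linearly independent unit vectors u,v ∈ E^s_σ ∩ E^{cu}(σ) with ‖∧²Dφ_t(u∧v)‖ → 0 as t → +∞, contradicting area expansion of E^{cu}; hence Ind(σ) ≤ dim E^{ss} + 1. -/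
/- Common setting: the compact manifold is modelled by a finite-dimensional real
inner product space `E`; a `FlowPkg` packages a `C¹` vector field `X`, its flow `φ`,
the tangent flow `Dφ` and the derivative `DX` of the vector field. -/

open scoped RealInnerProductSpace

variable {E : Type*} [NormedAddCommGroup E] [InnerProductSpace ℝ E] [FiniteDimensional ℝ E]

section Stmt3Aux

variable {E : Type*} [NormedAddCommGroup E] [InnerProductSpace ℝ E] [FiniteDimensional ℝ E]

/-- The tangent flow at time `-t` at `φ t x` inverts the tangent flow at time `t` at `x`. -/
lemma FlowPkg.Dφ_neg_cancel (P : FlowPkg E) (t : ℝ) (x w : E) :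
    P.Dφ (-t) (P.φ t x) (P.Dφ t x w) = w := by
  have h1 : HasFDerivAt (fun y => P.φ (-t) (P.φ t y))
      ((P.Dφ (-t) (P.φ t x)).comp (P.Dφ t x)) x :=
    (P.deriv_space (-t) (P.φ t x)).comp x (P.deriv_space t x)
  have h2 : (fun y => P.φ (-t) (P.φ t y)) = fun y => y := by
    funext y
    rw [← P.flow_add, neg_add_cancel, P.flow_zero]
  rw [h2] at h1
  have h3 : (P.Dφ (-t) (P.φ t x)).comp (P.Dφ t x) = ContinuousLinearMap.id ℝ E :=
    h1.unique (hasFDerivAt_id x)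
  calc P.Dφ (-t) (P.φ t x) (P.Dφ t x w)
      = ((P.Dφ (-t) (P.φ t x)).comp (P.Dφ t x)) w := rfl
    _ = w := by rw [h3]; rfl

lemma area_nonneg (u v : E) : 0 ≤ area u v := Real.sqrt_nonneg _

lemma area_le_norm_mul_norm (u v : E) : area u v ≤ ‖u‖ * ‖v‖ := by
  have h1 : ‖u‖ ^ 2 * ‖v‖ ^ 2 - ⟪u, v⟫ ^ 2 ≤ (‖u‖ * ‖v‖) ^ 2 := by nlinarith [sq_nonneg ⟪u, v⟫]
  calc area u v ≤ Real.sqrt ((‖u‖ * ‖v‖) ^ 2) := Real.sqrt_le_sqrt h1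
    _ = ‖u‖ * ‖v‖ := Real.sqrt_sq (by positivity)

lemma area_of_orthonormal {u v : E} (hu : ‖u‖ = 1) (hv : ‖v‖ = 1) (huv : ⟪u, v⟫ = 0) :
    area u v = 1 := by
  unfold area
  rw [hu, hv, huv]
  norm_num

/-- Key construction: two orthonormal vectors in `E^s_σ ∩ E^{cu}(σ)`. -/
lemma stmt3_aux (P : FlowPkg E) (Λ : Set E) (S : PosSingHyp P Λ) (σ : E) (hσ : σ ∈ Λ)
    (hs : HypSing P σ)
    (hdim : Module.finrank ℝ (S.Ess σ) + 2 ≤ Module.finrank ℝ hs.Es) :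
    ∃ u v : E, u ∈ hs.Es ⊓ S.Ecu σ ∧ v ∈ hs.Es ⊓ S.Ecu σ ∧
      ‖u‖ = 1 ∧ ‖v‖ = 1 ∧ ⟪u, v⟫ = 0 := by
  have hrk : 2 ≤ Module.finrank ℝ (hs.Es ⊓ S.Ecu σ : Submodule ℝ E) := by
    have h1 := Submodule.finrank_sup_add_finrank_inf_eq hs.Es (S.Ecu σ)
    have h2 := Submodule.finrank_add_eq_of_isCompl (S.compl σ hσ)
    have h3 : Module.finrank ℝ (hs.Es ⊔ S.Ecu σ : Submodule ℝ E) ≤ Module.finrank ℝ E :=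
      Submodule.finrank_le _
    omega
  let b := stdOrthonormalBasis ℝ (hs.Es ⊓ S.Ecu σ : Submodule ℝ E)
  let i0 : Fin (Module.finrank ℝ (hs.Es ⊓ S.Ecu σ : Submodule ℝ E)) := ⟨0, by omega⟩
  let i1 : Fin (Module.finrank ℝ (hs.Es ⊓ S.Ecu σ : Submodule ℝ E)) := ⟨1, by omega⟩
  refine ⟨↑(b i0), ↑(b i1), (b i0).2, (b i1).2, ?_, ?_, ?_⟩
  · have h := b.orthonormal.1 i0
    rwa [Submodule.coe_norm] at h
  · have h := b.orthonormal.1 i1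
    rwa [Submodule.coe_norm] at h
  · have hne : i0 ≠ i1 := by simp [i0, i1, Fin.ext_iff]
    have h := b.orthonormal.2 hne
    rw [← Submodule.coe_inner]
    exact h

end Stmt3Aux

/-- if `Ind(σ) ≥ dim E^{ss} + 2` one finds two linearly independent
unit vectors in `E^s_σ ∩ E^{cu}(σ)` whose wedge is contracted in forward time,
contradicting area expansion; hence `Ind(σ) ≤ dim E^{ss} + 1`. -/
theorem stmt3 {E : Type*} [NormedAddCommGroup E] [InnerProductSpace ℝ E]
    [FiniteDimensional ℝ E] (P : FlowPkg E) (Λ : Set E)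
    (hΛc : IsCompact Λ) (hinv : P.Invariant Λ)
    (S : PosSingHyp P Λ) (σ : E) (hσ : σ ∈ Λ) (h0 : P.X σ = 0)
    (hs : HypSing P σ) :
    ((Module.finrank ℝ (S.Ess σ) + 2 ≤ Module.finrank ℝ hs.Es) →
      ∃ u v : E, u ∈ hs.Es ⊓ S.Ecu σ ∧ v ∈ hs.Es ⊓ S.Ecu σ ∧
        ‖u‖ = 1 ∧ ‖v‖ = 1 ∧ LinearIndependent ℝ ![u, v] ∧
        Filter.Tendsto (fun t : ℝ => area (P.Dφ t σ u) (P.Dφ t σ v))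
          Filter.atTop (nhds 0)) ∧
    Module.finrank ℝ hs.Es ≤ Module.finrank ℝ (S.Ess σ) + 1 := by
  have hCs : (0:ℝ) < hs.C := lt_of_lt_of_le one_pos hs.hC
  have hCS : (0:ℝ) < S.C := lt_trans one_pos S.hC
  have hexp : Filter.Tendsto (fun t : ℝ => Real.exp (-hs.lam * t)) Filter.atTop (nhds 0) :=
    Real.tendsto_exp_atBot.comp
      (Filter.Tendsto.const_mul_atTop_of_neg (by linarith [hs.hlam]) Filter.tendsto_id)
  have hexpS : Filter.Tendsto (fun t : ℝ => Real.exp (-S.lam * t)) Filter.atTop (nhds 0) :=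
    Real.tendsto_exp_atBot.comp
      (Filter.Tendsto.const_mul_atTop_of_neg (by linarith [S.hlam]) Filter.tendsto_id)
  have main : Module.finrank ℝ (S.Ess σ) + 2 ≤ Module.finrank ℝ hs.Es →
      ∃ u v : E, u ∈ hs.Es ⊓ S.Ecu σ ∧ v ∈ hs.Es ⊓ S.Ecu σ ∧
        ‖u‖ = 1 ∧ ‖v‖ = 1 ∧ ⟪u, v⟫ = 0 ∧
        (∀ t ≥ (0:ℝ), area (P.Dφ t σ u) (P.Dφ t σ v) ≤
          (hs.C * Real.exp (-hs.lam * t)) * (hs.C * Real.exp (-hs.lam * t))) ∧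
        Filter.Tendsto (fun t : ℝ => area (P.Dφ t σ u) (P.Dφ t σ v))
          Filter.atTop (nhds 0) := by
    intro hdim
    obtain ⟨u, v, hu, hv, hu1, hv1, huv⟩ := stmt3_aux P Λ S σ hσ hs hdim
    have hbound : ∀ t ≥ (0:ℝ), area (P.Dφ t σ u) (P.Dφ t σ v) ≤
        (hs.C * Real.exp (-hs.lam * t)) * (hs.C * Real.exp (-hs.lam * t)) := by
      intro t ht
      have h1 : area (P.Dφ t σ u) (P.Dφ t σ v) ≤ ‖P.Dφ t σ u‖ * ‖P.Dφ t σ v‖ :=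
        area_le_norm_mul_norm _ _
      have h2 : ‖P.Dφ t σ u‖ * ‖P.Dφ t σ v‖ ≤
          (hs.C * Real.exp (-hs.lam * t) * ‖u‖) * (hs.C * Real.exp (-hs.lam * t) * ‖v‖) := by
        apply mul_le_mul (hs.contr t ht u hu.1) (hs.contr t ht v hv.1) (norm_nonneg _)
        have : (0:ℝ) ≤ hs.C * Real.exp (-hs.lam * t) :=
          mul_nonneg hCs.le (Real.exp_nonneg _)
        exact mul_nonneg this (norm_nonneg _)
      rw [hu1, hv1] at h2
      calc area (P.Dφ t σ u) (P.Dφ t σ v) ≤ ‖P.Dφ t σ u‖ * ‖P.Dφ t σ v‖ := h1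
        _ ≤ (hs.C * Real.exp (-hs.lam * t) * 1) * (hs.C * Real.exp (-hs.lam * t) * 1) := h2
        _ = (hs.C * Real.exp (-hs.lam * t)) * (hs.C * Real.exp (-hs.lam * t)) := by ring
    have hg : Filter.Tendsto
        (fun t : ℝ => (hs.C * Real.exp (-hs.lam * t)) * (hs.C * Real.exp (-hs.lam * t)))
        Filter.atTop (nhds 0) := by
      have := (hexp.const_mul hs.C).mul (hexp.const_mul hs.C)
      simpa using this
    have htend : Filter.Tendsto (fun t : ℝ => area (P.Dφ t σ u) (P.Dφ t σ v))
        Filter.atTop (nhds 0) := by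
      apply tendsto_of_tendsto_of_tendsto_of_le_of_le' tendsto_const_nhds hg
      · exact Filter.Eventually.of_forall (fun t => area_nonneg _ _)
      · filter_upwards [Filter.eventually_ge_atTop 0] with t ht using hbound t ht
    exact ⟨u, v, hu, hv, hu1, hv1, huv, hbound, htend⟩
  constructor
  · intro hdim
    obtain ⟨u, v, hu, hv, hu1, hv1, huv, _, htend⟩ := main hdim
    have horth : Orthonormal ℝ ![u, v] := by
      rw [orthonormal_iff_ite]
      intro i j
      fin_cases i <;> fin_cases j <;>
        simp [real_inner_self_eq_norm_sq, hu1, hv1, huv, real_inner_comm u v]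
    exact ⟨u, v, hu, hv, hu1, hv1, horth.linearIndependent, htend⟩
  · by_contra hlt
    push_neg at hlt
    obtain ⟨u, v, hu, hv, hu1, hv1, huv, hbound, _⟩ := main (by omega)
    have h1 : ∀ t ≥ (0:ℝ), (1:ℝ) ≤ S.C * Real.exp (-S.lam * t) *
        ((hs.C * Real.exp (-hs.lam * t)) * (hs.C * Real.exp (-hs.lam * t))) := by
      intro t ht
      have hx : P.φ t σ ∈ Λ := hinv t σ hσ
      have hu' : P.Dφ t σ u ∈ S.Ecu (P.φ t σ) := S.invu t σ hσ u hu.2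
      have hv' : P.Dφ t σ v ∈ S.Ecu (P.φ t σ) := S.invu t σ hσ v hv.2
      have hae := S.area_exp t ht (P.φ t σ) hx _ hu' _ hv'
      rw [P.Dφ_neg_cancel t σ u, P.Dφ_neg_cancel t σ v,
        area_of_orthonormal hu1 hv1 huv] at hae
      refine le_trans hae (mul_le_mul_of_nonneg_left (hbound t ht) ?_)
      exact mul_nonneg hCS.le (Real.exp_nonneg _)
    have hg : Filter.Tendsto (fun t : ℝ => S.C * Real.exp (-S.lam * t) *
        ((hs.C * Real.exp (-hs.lam * t)) * (hs.C * Real.exp (-hs.lam * t))))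
        Filter.atTop (nhds 0) := by
      have := (hexpS.const_mul S.C).mul ((hexp.const_mul hs.C).mul (hexp.const_mul hs.C))
      simpa using this
    have hcontra : (1:ℝ) ≤ 0 := by
      refine ge_of_tendsto hg ?_
      filter_upwards [Filter.eventually_ge_atTop 0] with t ht using h1 t ht
    linarith
end
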